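/- arXiv:1104.4630 — 5 statements merged into one kernel-verified Lean document; each statement's English description precedes it below -/
import Mathlib

section
/- Pentagon relation for the Rogers dilogarithm: for all real numbers x, y with 0 ≤ x ≤ 1, 0 ≤ y ≤ 1 and x·y < 1, one has L(x) + L(y) = L(x(1−y)/(1−xy)) + L(xy) + L(y(1−x)/(1−xy)). -/
open Real

open MeasureTheory Set Filter

/-- The Rogers dilogarithm, defined for `0 ≤ x ≤ 1` by
`L(x) = -(1/2) ∫₀ˣ (log(1-y)/y + log(y)/(1-y)) dy`. -/
noncomputable def rogersL (x : ℝ) : ℝ :=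
  -(1 / 2) * ∫ y in (0:ℝ)..x, (Real.log (1 - y) / y + Real.log y / (1 - y))

namespace RogersAux

noncomputable def rf (t : ℝ) : ℝ := Real.log (1 - t) / t + Real.log t / (1 - t)

lemma rogersL_def : rogersL = fun x => -(1/2) * ∫ t in (0:ℝ)..x, rf t := rfl

lemma rogersL_zero : rogersL 0 = 0 := by simp [rogersL]

lemma abs_log_le_rpow {t : ℝ} (h0 : 0 < t) (h1 : t ≤ 1) :
    |Real.log t| ≤ 2 * t ^ (-(1/2) : ℝ) := by
  have hlog : Real.log t ≤ 0 := Real.log_nonpos h0.le h1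
  have hpos : (0:ℝ) < t ^ (-(1/2) : ℝ) := Real.rpow_pos_of_pos h0 _
  have h2 : Real.log (t ^ (-(1/2) : ℝ)) ≤ t ^ (-(1/2):ℝ) - 1 :=
    Real.log_le_sub_one_of_pos hpos
  rw [Real.log_rpow h0] at h2
  rw [abs_of_nonpos hlog]
  nlinarith

lemma abs_log_le_div {t : ℝ} (h0 : 0 < t) (h1 : t ≤ 1) :
    |Real.log t| ≤ (1 - t) / t := by
  have h2 : Real.log t⁻¹ ≤ t⁻¹ - 1 := Real.log_le_sub_one_of_pos (by positivity)
  rw [Real.log_inv] at h2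
  rw [abs_of_nonpos (Real.log_nonpos h0.le h1)]
  have ht : (1 - t)/t = t⁻¹ - 1 := by field_simp
  rw [ht]; linarith

lemma meas1 : Measurable fun t : ℝ => Real.log (1 - t) / t :=
  (Real.measurable_log.comp (measurable_const.sub measurable_id)).div measurable_id

lemma meas2 : Measurable fun t : ℝ => Real.log t / (1 - t) :=
  Real.measurable_log.div (measurable_const.sub measurable_id)

lemma uIoc_eq : Set.uIoc (0:ℝ) (1/2) = Ioc 0 (1/2) := uIoc_of_le (by norm_num)
lemma uIoc_eq' : Set.uIoc ((1:ℝ)/2) 1 = Ioc (1/2) 1 := uIoc_of_le (by norm_num)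

lemma intInt2a : IntervalIntegrable (fun t => Real.log t / (1 - t)) volume 0 (1/2) := by
  have hg : IntervalIntegrable (fun t : ℝ => 4 * t ^ (-(1/2):ℝ)) volume 0 (1/2) :=
    (intervalIntegral.intervalIntegrable_rpow' (by norm_num)).const_mul 4
  refine hg.mono_fun meas2.aestronglyMeasurable ?_
  filter_upwards [ae_restrict_mem measurableSet_uIoc] with t ht
  rw [uIoc_eq] at ht
  obtain ⟨ht0, ht1⟩ := ht
  have hpos : (0:ℝ) < t ^ (-(1/2) : ℝ) := Real.rpow_pos_of_pos ht0 _
  have hlog := abs_log_le_rpow ht0 (by linarith)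
  have h1t : (0:ℝ) < 1 - t := by linarith
  simp only [Real.norm_eq_abs]
  rw [abs_div, abs_of_pos h1t, abs_of_pos (by positivity : (0:ℝ) < 4 * t ^ (-(1/2):ℝ))]
  rw [div_le_iff₀ h1t]
  nlinarith

lemma intInt2b : IntervalIntegrable (fun t => Real.log t / (1 - t)) volume (1/2) 1 := by
  refine (intervalIntegrable_const (c := (2:ℝ))).mono_fun meas2.aestronglyMeasurable ?_
  filter_upwards [ae_restrict_mem measurableSet_uIoc] with t ht
  rw [uIoc_eq'] at ht
  obtain ⟨ht0, ht1⟩ := ht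
  simp only [Real.norm_eq_abs]
  rcases eq_or_lt_of_le ht1 with h | h
  · simp [h]
  · have h1t : (0:ℝ) < 1 - t := by linarith
    have hlog := abs_log_le_div (by linarith : (0:ℝ) < t) ht1
    rw [abs_div, abs_of_pos h1t, div_le_iff₀ h1t]
    have h2 : |(2:ℝ)| = 2 := by norm_num
    rw [h2]
    have ht' : (0:ℝ) < t := by linarith
    have h3 : (1 - t)/t ≤ 2*(1-t) := by
      rw [div_le_iff₀ ht']; nlinarith
    linarith

lemma intInt1a : IntervalIntegrable (fun t => Real.log (1 - t) / t) volume 0 (1/2) := by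
  refine (intervalIntegrable_const (c := (2:ℝ))).mono_fun meas1.aestronglyMeasurable ?_
  filter_upwards [ae_restrict_mem measurableSet_uIoc] with t ht
  rw [uIoc_eq] at ht
  obtain ⟨ht0, ht1⟩ := ht
  have h1t : (0:ℝ) < 1 - t := by linarith
  have hlog := abs_log_le_div h1t (by linarith : (1:ℝ) - t ≤ 1)
  simp only [Real.norm_eq_abs]
  rw [abs_div, abs_of_pos ht0, div_le_iff₀ ht0]
  have h2 : |(2:ℝ)| = 2 := by norm_num
  rw [h2]
  have h3 : (1 - (1 - t))/(1 - t) ≤ 2*t := by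
    rw [div_le_iff₀ h1t]; nlinarith
  linarith

lemma intInt1b : IntervalIntegrable (fun t => Real.log (1 - t) / t) volume (1/2) 1 := by
  have h0 : IntervalIntegrable (fun u : ℝ => u ^ (-(1/2):ℝ)) volume 0 (1/2) :=
    intervalIntegral.intervalIntegrable_rpow' (by norm_num)
  have h1 := h0.comp_sub_left 1
  norm_num at h1
  have hg : IntervalIntegrable (fun t : ℝ => 4 * (1 - t) ^ (-(1/2):ℝ)) volume (1/2) 1 :=
    (h1.symm).const_mul 4
  refine hg.mono_fun meas1.aestronglyMeasurable ?_
  filter_upwards [ae_restrict_mem measurableSet_uIoc] with t ht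
  rw [uIoc_eq'] at ht
  obtain ⟨ht0, ht1⟩ := ht
  simp only [Real.norm_eq_abs]
  rcases eq_or_lt_of_le ht1 with h | h
  · rw [h]
    simp [Real.zero_rpow (by norm_num : (-(1/2):ℝ) ≠ 0)]
  · have h1t : (0:ℝ) < 1 - t := by linarith
    have hpos : (0:ℝ) < (1 - t) ^ (-(1/2) : ℝ) := Real.rpow_pos_of_pos h1t _
    have hlog := abs_log_le_rpow h1t (by linarith : (1:ℝ) - t ≤ 1)
    have ht' : (0:ℝ) < t := by linarith
    rw [abs_div, abs_of_pos ht', abs_of_pos (by positivity : (0:ℝ) < 4 * (1-t) ^ (-(1/2):ℝ))]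
    rw [div_le_iff₀ ht']
    nlinarith

lemma rfInt : IntervalIntegrable rf volume 0 1 :=
  (intInt1a.trans intInt1b).add (intInt2a.trans intInt2b)

lemma rfInt' {x : ℝ} (h0 : 0 ≤ x) (h1 : x ≤ 1) : IntervalIntegrable rf volume 0 x :=
  rfInt.mono_set (by
    rw [uIcc_of_le h0, uIcc_of_le zero_le_one]
    exact Icc_subset_Icc le_rfl h1)

lemma rogersL_cont : ContinuousOn rogersL (Icc 0 1) := by
  have h := intervalIntegral.continuousOn_primitive_interval' rfInt
    (Set.left_mem_uIcc (a := (0:ℝ)) (b := 1))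
  rw [uIcc_of_le zero_le_one] at h
  rw [rogersL_def]
  exact continuousOn_const.mul h

lemma rogersL_deriv {t : ℝ} (h0 : 0 < t) (h1 : t < 1) :
    HasDerivAt rogersL (-(1/2) * rf t) t := by
  have hint := rfInt' h0.le h1.le
  have hmeas : StronglyMeasurableAtFilter rf (nhds t) :=
    ((meas1.add meas2).stronglyMeasurable).stronglyMeasurableAtFilter
  have hcont : ContinuousAt rf t := by
    have c1 : ContinuousAt (fun u : ℝ => Real.log (1 - u)) t :=
      (Real.continuousAt_log (ne_of_gt (by linarith : (0:ℝ) < 1 - t))).comp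
        ((continuous_const.sub continuous_id).continuousAt)
    have c2 : ContinuousAt (fun u : ℝ => Real.log u) t :=
      Real.continuousAt_log h0.ne'
    exact (c1.div continuousAt_id h0.ne').add
      (c2.div (continuous_const.sub continuous_id).continuousAt (show (1:ℝ) - t ≠ 0 from ne_of_gt (by linarith)))
  have h := intervalIntegral.integral_hasDerivAt_right hint hmeas hcont
  rw [rogersL_def]
  exact HasDerivAt.const_mul (-(1/2)) h


lemma pentagon_main {x y : ℝ} (hx0 : 0 < x) (hx1 : x < 1) (hy0 : 0 < y) (hy1 : y < 1) :
    rogersL x + rogersL y =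
      rogersL (x * (1 - y) / (1 - x * y)) + rogersL (x * y) +
        rogersL (y * (1 - x) / (1 - x * y)) := by
  set F : ℝ → ℝ := fun t => rogersL t + rogersL y - rogersL (t * (1 - y) / (1 - t * y)) -
    rogersL (t * y) - rogersL (y * (1 - t) / (1 - t * y)) with hF
  have hsub : Icc (0:ℝ) x ⊆ Icc 0 1 := Icc_subset_Icc le_rfl hx1.le
  have hden : ∀ t ∈ Icc (0:ℝ) x, (0:ℝ) < 1 - t * y := by
    intro t ht
    nlinarith [ht.1, ht.2]
  -- continuity of F on [0, x]
  have ca : ContinuousOn (fun t : ℝ => t * (1 - y) / (1 - t * y)) (Icc 0 x) :=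
    (continuous_id.mul continuous_const).continuousOn.div
      ((continuous_const.sub (continuous_id.mul continuous_const)).continuousOn)
      (fun t ht => (hden t ht).ne')
  have cc : ContinuousOn (fun t : ℝ => y * (1 - t) / (1 - t * y)) (Icc 0 x) :=
    (continuous_const.mul (continuous_const.sub continuous_id)).continuousOn.div
      ((continuous_const.sub (continuous_id.mul continuous_const)).continuousOn)
      (fun t ht => (hden t ht).ne')
  have ma : MapsTo (fun t : ℝ => t * (1 - y) / (1 - t * y)) (Icc 0 x) (Icc 0 1) := by
    intro t ht
    have h1 := hden t ht
    constructor
    · apply div_nonneg (by nlinarith [ht.1]) h1.le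
    · rw [div_le_one h1]
      nlinarith [ht.1, ht.2]
  have mc : MapsTo (fun t : ℝ => y * (1 - t) / (1 - t * y)) (Icc 0 x) (Icc 0 1) := by
    intro t ht
    have h1 := hden t ht
    have htx : t ≤ 1 := le_trans ht.2 hx1.le
    constructor
    · apply div_nonneg (by nlinarith [ht.1]) h1.le
    · rw [div_le_one h1]
      nlinarith [ht.1]
  have mb : MapsTo (fun t : ℝ => t * y) (Icc 0 x) (Icc 0 1) := by
    intro t ht
    have h1 : 0 ≤ t * y := by nlinarith [ht.1]
    have h2 : t * y ≤ 1 := by nlinarith [ht.1, ht.2]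
    exact ⟨h1, h2⟩
  have contF : ContinuousOn F (Icc 0 x) :=
    ((((rogersL_cont.mono hsub).add continuousOn_const).sub
      (rogersL_cont.comp ca ma)).sub
      (rogersL_cont.comp (continuous_id.mul continuous_const).continuousOn mb)).sub
      (rogersL_cont.comp cc mc)
  -- derivative of F is zero on (0, x)
  have derivF : ∀ t ∈ Ioo (0:ℝ) x, HasDerivAt F ((fun _ => (0:ℝ)) t) t := by
    intro t ht
    obtain ⟨ht0, htx⟩ := ht
    have ht1 : t < 1 := lt_trans htx hx1
    have h1t : (0:ℝ) < 1 - t := by linarith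
    have h1y : (0:ℝ) < 1 - y := by linarith
    have h1ty : (0:ℝ) < 1 - t * y := by nlinarith
    have ha0 : (0:ℝ) < t * (1 - y) / (1 - t * y) := by positivity
    have ha1 : t * (1 - y) / (1 - t * y) < 1 := by
      rw [div_lt_one h1ty]; nlinarith
    have hc0 : (0:ℝ) < y * (1 - t) / (1 - t * y) := by positivity
    have hc1 : y * (1 - t) / (1 - t * y) < 1 := by
      rw [div_lt_one h1ty]; nlinarith
    have hb0 : (0:ℝ) < t * y := by positivity
    have hb1 : t * y < 1 := by nlinarith
    -- derivatives of the inner maps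
    have hA : HasDerivAt (fun s : ℝ => s * (1 - y) / (1 - s * y))
        ((1 - y) / (1 - t * y) ^ 2) t := by
      have hu := (hasDerivAt_id t).mul_const (1 - y)
      have hv := ((hasDerivAt_id t).mul_const y).const_sub 1
      have h := hu.div hv h1ty.ne'
      refine h.congr_deriv ?_
      simp only [id]
      field_simp
      ring
    have hB : HasDerivAt (fun s : ℝ => s * y) y t := by
      simpa using (hasDerivAt_id t).mul_const y
    have hC : HasDerivAt (fun s : ℝ => y * (1 - s) / (1 - s * y))
        (-(y * (1 - y)) / (1 - t * y) ^ 2) t := by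
      have hu := ((hasDerivAt_id t).const_sub 1).const_mul y
      have hv := ((hasDerivAt_id t).mul_const y).const_sub 1
      have h := hu.div hv h1ty.ne'
      refine h.congr_deriv ?_
      simp only [id]
      field_simp
      ring
    have da : HasDerivAt (fun s : ℝ => rogersL (s * (1 - y) / (1 - s * y)))
        ((-(1/2) * rf (t * (1 - y) / (1 - t * y))) * ((1 - y) / (1 - t * y) ^ 2)) t :=
      (rogersL_deriv ha0 ha1).comp (h₂ := rogersL) t hA
    have db : HasDerivAt (fun s : ℝ => rogersL (s * y))
        ((-(1/2) * rf (t * y)) * y) t :=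
      (rogersL_deriv hb0 hb1).comp (h₂ := rogersL) t hB
    have dc : HasDerivAt (fun s : ℝ => rogersL (y * (1 - s) / (1 - s * y)))
        ((-(1/2) * rf (y * (1 - t) / (1 - t * y))) * (-(y * (1 - y)) / (1 - t * y) ^ 2)) t :=
      (rogersL_deriv hc0 hc1).comp (h₂ := rogersL) t hC
    have d1 := rogersL_deriv ht0 ht1
    have hFd : HasDerivAt F
        ((-(1/2) * rf t)
          - (-(1/2) * rf (t * (1 - y) / (1 - t * y))) * ((1 - y) / (1 - t * y) ^ 2)
          - (-(1/2) * rf (t * y)) * y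
          - (-(1/2) * rf (y * (1 - t) / (1 - t * y))) * (-(y * (1 - y)) / (1 - t * y) ^ 2)) t :=
      (((d1.add_const (rogersL y)).sub da).sub db).sub dc
    have hzero : ((-(1/2) * rf t)
          - (-(1/2) * rf (t * (1 - y) / (1 - t * y))) * ((1 - y) / (1 - t * y) ^ 2)
          - (-(1/2) * rf (t * y)) * y
          - (-(1/2) * rf (y * (1 - t) / (1 - t * y))) * (-(y * (1 - y)) / (1 - t * y) ^ 2))
        = 0 := by
      have e1 : 1 - t * (1 - y) / (1 - t * y) = (1 - t) / (1 - t * y) := by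
        field_simp
        ring
      have e2 : 1 - y * (1 - t) / (1 - t * y) = (1 - y) / (1 - t * y) := by
        rw [one_sub_div h1ty.ne']
        ring
      simp only [rf, e1, e2]
      rw [Real.log_div (by positivity) h1ty.ne',
          Real.log_div (by positivity) h1ty.ne',
          Real.log_div (by positivity) h1ty.ne',
          Real.log_div (by positivity) h1ty.ne',
          Real.log_mul ht0.ne' h1y.ne',
          Real.log_mul hy0.ne' h1t.ne',
          Real.log_mul ht0.ne' hy0.ne']
      field_simp
      ring
    rw [hzero] at hFd
    exact hFd
  obtain ⟨c, _, hc⟩ := exists_hasDerivAt_eq_slope F (fun _ => (0:ℝ)) hx0 contF derivF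
  have hF0 : F 0 = 0 := by
    simp [hF, rogersL_zero]
  have hFx : F x = 0 := by
    have h := hc.symm
    rw [hF0, sub_zero, sub_zero, div_eq_iff hx0.ne'] at h
    simpa using h
  simp only [hF] at hFx
  linarith

end RogersAux

/-- Pentagon relation for the Rogers dilogarithm. -/
theorem rogersL_pentagon (x y : ℝ) (hx0 : 0 ≤ x) (hx1 : x ≤ 1) (hy0 : 0 ≤ y) (hy1 : y ≤ 1)
    (hxy : x * y < 1) :
    rogersL x + rogersL y =
      rogersL (x * (1 - y) / (1 - x * y)) + rogersL (x * y) +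
        rogersL (y * (1 - x) / (1 - x * y)) := by
  rcases eq_or_lt_of_le hx0 with hx | hx
  · rw [← hx]
    norm_num [RogersAux.rogersL_zero]
  rcases eq_or_lt_of_le hy0 with hy | hy
  · rw [← hy]
    norm_num [RogersAux.rogersL_zero]
  rcases eq_or_lt_of_le hx1 with hx1' | hx1'
  · rw [hx1'] at hxy ⊢
    rw [one_mul] at hxy
    have h1y : (1:ℝ) - y ≠ 0 := ne_of_gt (by linarith)
    rw [one_mul, one_mul, div_self h1y, sub_self, mul_zero, zero_div,
      RogersAux.rogersL_zero, add_zero]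
  rcases eq_or_lt_of_le hy1 with hy1' | hy1'
  · rw [hy1'] at hxy ⊢
    rw [mul_one] at hxy
    have h1x : (1:ℝ) - x ≠ 0 := ne_of_gt (by linarith)
    rw [mul_one, one_mul, sub_self, mul_zero, zero_div, div_self h1x,
      RogersAux.rogersL_zero, zero_add]
  · exact RogersAux.pentagon_main hx hx1' hy hy1'
end

section
/- Second relation between the Rogers and Euler dilogarithms: for all real x > 0, −L(x/(1+x)) = Li₂(−x) + (1/2)·log(x)·log(1+x). -/
open Real MeasureTheory Set intervalIntegral

lemma meas_g : Measurable fun y : ℝ => Real.log (1 - y) / y + Real.log y / (1 - y) :=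
  ((Real.measurable_log.comp (measurable_const.sub measurable_id)).div measurable_id).add
    (Real.measurable_log.div (measurable_const.sub measurable_id))

lemma meas_f1 : Measurable fun y : ℝ => Real.log (1 - y) / y :=
  (Real.measurable_log.comp (measurable_const.sub measurable_id)).div measurable_id

lemma int_g {b : ℝ} (hb0 : 0 ≤ b) (hb1 : b < 1) :
    IntervalIntegrable (fun y : ℝ => Real.log (1 - y) / y + Real.log y / (1 - y)) volume 0 b := by
  rw [intervalIntegrable_iff_integrableOn_Ioc_of_le hb0]
  have hmaj : IntegrableOn (fun y : ℝ => 3 / (1 - b) * y ^ (-(1/2) : ℝ)) (Ioc 0 b) volume := by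
    have h := (intervalIntegrable_rpow' (a := 0) (b := b) (r := -(1/2))
      (by norm_num)).const_mul (3 / (1 - b))
    rwa [intervalIntegrable_iff_integrableOn_Ioc_of_le hb0] at h
  refine hmaj.integrable.mono meas_g.aestronglyMeasurable ?_
  rw [ae_restrict_iff' measurableSet_Ioc]
  filter_upwards with y hy
  obtain ⟨hy0, hyb⟩ := hy
  have hy1 : y < 1 := lt_of_le_of_lt hyb hb1
  have h1b : (0:ℝ) < 1 - b := by linarith
  have h1y : (0:ℝ) < 1 - y := by linarith
  have hrpow : (0:ℝ) < y ^ (-(1/2) : ℝ) := Real.rpow_pos_of_pos hy0 _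
  have hrpow1 : (1:ℝ) ≤ y ^ (-(1/2) : ℝ) :=
    Real.one_le_rpow_of_pos_of_le_one_of_nonpos hy0 hy1.le (by norm_num)
  have hlog1 : |Real.log (1 - y)| ≤ y / (1 - y) := by
    rw [abs_of_nonpos (Real.log_nonpos (by linarith) (by linarith))]
    have := Real.log_le_sub_one_of_pos (x := (1 - y)⁻¹) (by positivity)
    rw [Real.log_inv] at this
    have h2 : (1 - y)⁻¹ - 1 = y / (1 - y) := by field_simp; ring
    linarith [h2 ▸ this]
  have hb1' : |Real.log (1 - y) / y| ≤ 1 / (1 - b) := by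
    rw [abs_div, abs_of_pos hy0, div_le_div_iff₀ hy0 h1b]
    calc |Real.log (1 - y)| * (1 - b) ≤ (y / (1 - y)) * (1 - y) := by
          apply mul_le_mul hlog1 (by linarith) (by linarith) (by positivity)
      _ = y := by field_simp
      _ = 1 * y := (one_mul y).symm
  have hlogy : |Real.log y| ≤ 2 * y ^ (-(1/2) : ℝ) := by
    rw [abs_of_nonpos (Real.log_nonpos hy0.le hy1.le)]
    have h := Real.log_le_sub_one_of_pos (x := y ^ (-(1/2) : ℝ)) hrpow
    rw [Real.log_rpow hy0] at h
    nlinarith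
  have hb2' : |Real.log y / (1 - y)| ≤ 2 * y ^ (-(1/2) : ℝ) / (1 - b) := by
    rw [abs_div, abs_of_pos h1y, div_le_div_iff₀ h1y h1b]
    calc |Real.log y| * (1 - b) ≤ (2 * y ^ (-(1/2) : ℝ)) * (1 - y) := by
          apply mul_le_mul hlogy (by linarith) (by linarith) (by positivity)
      _ = 2 * y ^ (-(1/2) : ℝ) * (1 - y) := rfl
  have hnorm : ‖3 / (1 - b) * y ^ (-(1/2) : ℝ)‖ = 3 / (1 - b) * y ^ (-(1/2) : ℝ) := by
    rw [Real.norm_eq_abs, abs_of_pos (by positivity)]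
  rw [Real.norm_eq_abs, hnorm]
  calc |Real.log (1 - y) / y + Real.log y / (1 - y)|
      ≤ |Real.log (1 - y) / y| + |Real.log y / (1 - y)| := abs_add_le _ _
    _ ≤ 1 / (1 - b) + 2 * y ^ (-(1/2) : ℝ) / (1 - b) := add_le_add hb1' hb2'
    _ ≤ 3 / (1 - b) * y ^ (-(1/2) : ℝ) := by
        rw [← add_div, div_mul_eq_mul_div, div_le_div_iff₀ h1b h1b]
        nlinarith

lemma int_f1 {c : ℝ} (hc : 0 ≤ c) :
    IntervalIntegrable (fun y : ℝ => Real.log (1 - y) / y) volume 0 (-c) := by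
  apply IntervalIntegrable.symm
  rw [intervalIntegrable_iff_integrableOn_Ioc_of_le (by linarith : -c ≤ (0:ℝ))]
  refine Integrable.mono' (g := fun _ => (1:ℝ)) (integrableOn_const measure_Ioc_lt_top.ne (by simp))
    meas_f1.aestronglyMeasurable ?_
  rw [ae_restrict_iff' measurableSet_Ioc]
  filter_upwards with y hy
  obtain ⟨hy1, hy2⟩ := hy
  rcases eq_or_lt_of_le hy2 with h | h
  · simp [h]
  · have h1y : (1:ℝ) < 1 - y := by linarith
    have hlognn : 0 ≤ Real.log (1 - y) := Real.log_nonneg h1y.le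
    have hlogle : Real.log (1 - y) ≤ -y := by
      have := Real.log_le_sub_one_of_pos (x := 1 - y) (by linarith)
      linarith
    rw [norm_div, Real.norm_eq_abs, Real.norm_eq_abs, abs_of_nonneg hlognn, abs_of_neg h,
      div_le_one (by linarith)]
    linarith

/-- The Euler dilogarithm, defined for `x ≤ 1` by `Li₂(x) = -∫₀ˣ log(1-y)/y dy`. -/
noncomputable def Li2 (x : ℝ) : ℝ :=
  -∫ y in (0:ℝ)..x, Real.log (1 - y) / y

/-- Second relation between the Rogers and Euler dilogarithms. -/
theorem neg_rogersL_eq_Li2_add (x : ℝ) (hx : 0 < x) :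
    -rogersL (x / (1 + x)) = Li2 (-x) + (1 / 2) * Real.log x * Real.log (1 + x) := by
  have h1x : (0:ℝ) < 1 + x := by linarith
  have hu0 : 0 < x / (1 + x) := div_pos hx h1x
  have hu1 : x / (1 + x) < 1 := by rw [div_lt_one h1x]; linarith
  set F : ℝ → ℝ := fun s =>
    -(-(1 / 2) * ∫ y in (0:ℝ)..(s / (1 + s)), (Real.log (1 - y) / y + Real.log y / (1 - y)))
      - (-(∫ y in (0:ℝ)..(-s), Real.log (1 - y) / y))
      - 1 / 2 * (Real.log s * Real.log (1 + s)) with hFdef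
  -- Continuity of F on [0, x]
  have hmaps : ∀ t ∈ Icc (0:ℝ) x, t / (1 + t) ∈ Icc (0:ℝ) (x / (1 + x)) := by
    intro t ht
    obtain ⟨ht0, htx⟩ := ht
    have h1t : (0:ℝ) < 1 + t := by linarith
    refine ⟨by positivity, ?_⟩
    rw [div_le_div_iff₀ h1t h1x]; nlinarith
  have hcontF : ContinuousOn F (Icc 0 x) := by
    have c1 : ContinuousOn (fun t : ℝ =>
        ∫ y in (0:ℝ)..(t / (1 + t)), (Real.log (1 - y) / y + Real.log y / (1 - y)))
        (Icc 0 x) := by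
      have hprim : ContinuousOn (fun s : ℝ =>
          ∫ y in (0:ℝ)..s, (Real.log (1 - y) / y + Real.log y / (1 - y)))
          (Icc 0 (x / (1 + x))) := by
        have h := intervalIntegral.continuousOn_primitive_interval'
          (int_g hu0.le hu1) (left_mem_uIcc (a := (0:ℝ)) (b := x / (1 + x)))
        rwa [uIcc_of_le hu0.le] at h
      have hφ : ContinuousOn (fun t : ℝ => t / (1 + t)) (Icc 0 x) := by
        apply ContinuousOn.div continuousOn_id (by fun_prop)
        intro t ht
        have := ht.1
        intro h; linarith
      exact hprim.comp hφ hmaps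
    have c2 : ContinuousOn (fun t : ℝ =>
        ∫ y in (0:ℝ)..(-t), Real.log (1 - y) / y) (Icc 0 x) := by
      have hprim : ContinuousOn (fun s : ℝ => ∫ y in (0:ℝ)..s, Real.log (1 - y) / y)
          (Icc (-x) 0) := by
        have h := intervalIntegral.continuousOn_primitive_interval'
          (int_f1 hx.le) (left_mem_uIcc (a := (0:ℝ)) (b := -x))
        rwa [uIcc_of_ge (by linarith : -x ≤ (0:ℝ))] at h
      exact hprim.comp continuous_neg.continuousOn
        (fun t ht => ⟨by linarith [ht.2], by linarith [ht.1]⟩)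
    have c3 : ContinuousOn (fun t : ℝ => Real.log t * Real.log (1 + t)) (Icc 0 x) := by
      intro t ht
      rcases eq_or_lt_of_le ht.1 with h0 | h0
      · -- t = 0
        subst h0
        have htend : Filter.Tendsto (fun t : ℝ => Real.log t * Real.log (1 + t))
            (nhdsWithin 0 (Icc 0 x)) (nhds 0) := by
          apply squeeze_zero_norm' (a := fun t : ℝ => |t * Real.log t|)
          · filter_upwards [self_mem_nhdsWithin] with s hs
            have hs0 : (0:ℝ) ≤ s := hs.1
            have hl1 : 0 ≤ Real.log (1 + s) := Real.log_nonneg (by linarith)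
            have hl2 : Real.log (1 + s) ≤ s := by
              have := Real.log_le_sub_one_of_pos (x := 1 + s) (by linarith)
              linarith
            rw [Real.norm_eq_abs, abs_mul, abs_mul, abs_of_nonneg hl1, abs_of_nonneg hs0]
            nlinarith [abs_nonneg (Real.log s)]
          · have h := (Real.continuous_mul_log.abs.tendsto 0).mono_left
              (nhdsWithin_le_nhds (s := Icc (0:ℝ) x))
            simpa using h
        have heq : (fun t : ℝ => Real.log t * Real.log (1 + t)) 0 = 0 := by norm_num
        unfold ContinuousWithinAt
        rw [heq]
        exact htend
      · have h1t : (0:ℝ) < 1 + t := by linarith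
        apply ContinuousAt.continuousWithinAt
        exact (Real.continuousAt_log h0.ne').mul
          ((Real.continuousAt_log h1t.ne').comp (by fun_prop))
    exact ((c1.const_smul (-(1/2) : ℝ)).neg.sub c2.neg).sub (continuousOn_const.mul c3)
  -- Derivative of F on (0, x)
  have hderivF : ∀ t ∈ Ioo (0:ℝ) x, HasDerivAt F 0 t := by
    intro t ht
    obtain ⟨ht0, htx⟩ := ht
    have h1t : (0:ℝ) < 1 + t := by linarith
    have hv0 : 0 < t / (1 + t) := div_pos ht0 h1t
    have hv1 : t / (1 + t) < 1 := by rw [div_lt_one h1t]; linarith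
    have hinner : HasDerivAt (fun s : ℝ => s / (1 + s)) (1 / (1 + t) ^ 2) t := by
      have h := (hasDerivAt_id t).div ((hasDerivAt_const t (1:ℝ)).add (hasDerivAt_id t)) h1t.ne'
      exact h.congr_deriv (by simp only [Pi.add_apply, id]; ring)
    have hGcont : ContinuousAt (fun y : ℝ => Real.log (1 - y) / y + Real.log y / (1 - y))
        (t / (1 + t)) := by
      have l1 : ContinuousAt (fun y : ℝ => Real.log (1 - y)) (t / (1 + t)) :=
        (Real.continuousAt_log (by linarith : (1:ℝ) - t / (1 + t) ≠ 0)).comp (by fun_prop)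
      exact (l1.div continuousAt_id hv0.ne').add
        ((Real.continuousAt_log hv0.ne').div (by fun_prop) (by intro h; linarith [h]))
    have hA : HasDerivAt (fun s : ℝ =>
        ∫ y in (0:ℝ)..(s / (1 + s)), (Real.log (1 - y) / y + Real.log y / (1 - y)))
        ((Real.log (1 - t / (1 + t)) / (t / (1 + t))
          + Real.log (t / (1 + t)) / (1 - t / (1 + t))) * (1 / (1 + t) ^ 2)) t := by
      have hout := intervalIntegral.integral_hasDerivAt_right (int_g hv0.le hv1)
        meas_g.aestronglyMeasurable.stronglyMeasurableAtFilter hGcont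
      exact hout.comp t hinner
    have hf1cont : ContinuousAt (fun y : ℝ => Real.log (1 - y) / y) (-t) := by
      have l1 : ContinuousAt (fun y : ℝ => Real.log (1 - y)) (-t) :=
        (Real.continuousAt_log (by intro h; simp at h; linarith)).comp (by fun_prop)
      exact l1.div continuousAt_id (by intro h; simp at h; linarith)
    have hB : HasDerivAt (fun s : ℝ => ∫ y in (0:ℝ)..(-s), Real.log (1 - y) / y)
        (Real.log (1 - -t) / (-t) * (-1)) t := by
      have hout := intervalIntegral.integral_hasDerivAt_right (int_f1 ht0.le)
        meas_f1.aestronglyMeasurable.stronglyMeasurableAtFilter hf1cont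
      exact hout.comp t (hasDerivAt_neg t)
    have hlog1p : HasDerivAt (fun s : ℝ => Real.log (1 + s)) (1 + t)⁻¹ t := by
      have h := (Real.hasDerivAt_log h1t.ne').comp t
        ((hasDerivAt_const t (1:ℝ)).add (hasDerivAt_id t))
      exact h.congr_deriv (by simp)
    have hC : HasDerivAt (fun s : ℝ => Real.log s * Real.log (1 + s))
        (t⁻¹ * Real.log (1 + t) + Real.log t * (1 + t)⁻¹) t :=
      (Real.hasDerivAt_log ht0.ne').mul hlog1p
    have hFd := (((hA.const_mul (-(1 / 2) : ℝ)).neg).sub hB.neg).sub (hC.const_mul (1 / 2 : ℝ))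
    have hzero :
        -(-(1 / 2) * ((Real.log (1 - t / (1 + t)) / (t / (1 + t))
            + Real.log (t / (1 + t)) / (1 - t / (1 + t))) * (1 / (1 + t) ^ 2)))
          - -(Real.log (1 - -t) / (-t) * (-1))
          - 1 / 2 * (t⁻¹ * Real.log (1 + t) + Real.log t * (1 + t)⁻¹) = 0 := by
      have e1 : 1 - t / (1 + t) = (1 + t)⁻¹ := by field_simp; ring
      have e2 : Real.log (t / (1 + t)) = Real.log t - Real.log (1 + t) :=
        Real.log_div ht0.ne' h1t.ne'
      have e3 : (1:ℝ) - -t = 1 + t := by ring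
      rw [e1, e2, e3, Real.log_inv]
      field_simp
      ring
    rw [hzero] at hFd
    exact hFd
  -- Mean value theorem
  obtain ⟨c, hc, hslope⟩ := exists_hasDerivAt_eq_slope F (fun _ => (0:ℝ)) hx hcontF hderivF
  have hF0 : F 0 = 0 := by
    simp [hFdef, intervalIntegral.integral_same]
  have hFx : F x = 0 := by
    rw [hF0, sub_zero, sub_zero] at hslope
    have hxne : x ≠ 0 := hx.ne'
    field_simp at hslope
    linarith
  simp only [hFdef] at hFx
  simp only [rogersL, Li2]
  linear_combination hFx
end

section
/- Classical dilogarithm identity of type A₂ (signed form): for all real y₁ > 0 and y₂ > 0, L(y₁/(1+y₁)) + L(y₂(1+y₁)/(1+y₂+y₁y₂)) − L(y₁/((1+y₁)(1+y₂))) − L(y₁y₂/(1+y₂+y₁y₂)) − L(y₂/(1+y₂)) = 0. -/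
open Real MeasureTheory intervalIntegral Set Filter Topology

noncomputable def dlf (y : ℝ) : ℝ := Real.log (1 - y) / y + Real.log y / (1 - y)

lemma integrableOn_log_Icc {x : ℝ} (hx0 : 0 ≤ x) (hx1 : x < 1) :
    IntegrableOn Real.log (Icc 0 x) volume := by
  have h1 : IntegrableOn (fun y : ℝ => -Real.log y) (Ioc 0 x) volume := by
    apply integrableOn_deriv_of_nonneg (g := fun y => y - y * Real.log y)
    · exact (continuous_id.sub Real.continuous_mul_log).continuousOn
    · intro y hy
      have hy0 : y ≠ 0 := ne_of_gt hy.1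
      have : HasDerivAt (fun y : ℝ => y - y * Real.log y) (1 - (Real.log y + 1)) y := by
        have hd : HasDerivAt (fun y : ℝ => y * Real.log y) (1 * Real.log y + y * y⁻¹) y :=
          (hasDerivAt_id y).mul (Real.hasDerivAt_log hy0)
        have : HasDerivAt (fun y : ℝ => y - y * Real.log y) (1 - (1 * Real.log y + y * y⁻¹)) y :=
          (hasDerivAt_id y).sub hd
        simpa [hy0, add_comm] using this
      simpa using this
    · intro y hy
      have : Real.log y ≤ 0 := Real.log_nonpos (le_of_lt hy.1) ((hy.2.trans hx1).le)
      linarith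
  have h2 : IntegrableOn Real.log (Ioc 0 x) volume := by
    have := h1.neg; simpa [Pi.neg_def] using this
  rwa [integrableOn_Icc_iff_integrableOn_Ioc]

lemma integrableOn_dlf {x : ℝ} (hx0 : 0 ≤ x) (hx1 : x < 1) :
    IntegrableOn dlf (Icc 0 x) volume := by
  have hg : IntegrableOn (fun y : ℝ => Real.log (1 - y) / y) (Icc 0 x) volume := by
    set h : ℝ → ℝ := fun y => if y = 0 then (-1 : ℝ) else Real.log (1 - y) / y with hh
    have hcont : ContinuousOn h (Icc 0 x) := by
      intro y hy
      rcases eq_or_ne y 0 with rfl | hy0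
      · -- continuity at 0
        have hder : HasDerivAt (fun y : ℝ => Real.log (1 - y)) (-1) 0 := by
          have h1 : HasDerivAt (fun y : ℝ => (1 : ℝ) - y) (-1) 0 := by
            exact ((hasDerivAt_const 0 (1:ℝ)).sub (hasDerivAt_id 0)).congr_deriv (by norm_num)
          have := (Real.hasDerivAt_log (by norm_num : (1:ℝ) - 0 ≠ 0)).comp 0 h1
          simpa [Function.comp_def] using this
        have hslope := hasDerivAt_iff_tendsto_slope.mp hder
        have heq : ∀ y : ℝ, y ≠ 0 → slope (fun y : ℝ => Real.log (1 - y)) 0 y = h y := by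
          intro y hy0
          simp [slope, hy0, hh, Real.log_one, div_eq_mul_inv, mul_comm]
        have ht : Tendsto h (𝓝[≠] 0) (𝓝 (-1)) := by
          refine hslope.congr' ?_
          filter_upwards [self_mem_nhdsWithin] with y hy0 using heq y hy0
        have : ContinuousAt h 0 := by
          rw [ContinuousAt, show h 0 = -1 from by simp [hh]]
          rw [← nhdsNE_sup_pure 0]
          exact ht.sup (tendsto_pure_nhds h 0 |>.congr (fun _ => rfl) |>.mono_right (by
            simp [hh])) |>.mono_left le_rfl
        exact this.continuousWithinAt
      · have hy1 : (1 : ℝ) - y ≠ 0 := by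
          have : y < 1 := lt_of_le_of_lt hy.2 hx1
          intro hc; linarith
        have hca : ContinuousAt (fun y : ℝ => Real.log (1 - y) / y) y :=
          ((Real.continuousAt_log hy1).comp ((continuous_const.sub continuous_id).continuousAt)).div
            continuousAt_id hy0
        exact (hca.congr (by filter_upwards [isOpen_ne.mem_nhds hy0] with z hz; simp [hh, hz])).continuousWithinAt
    have hint : IntegrableOn h (Icc 0 x) volume := hcont.integrableOn_Icc
    refine hint.congr_fun_ae ?_
    refine ae_restrict_of_ae ?_
    refine MeasureTheory.ae_iff.mpr (measure_mono_null ?_ (measure_singleton (0:ℝ)))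
    intro y hy
    simp only [mem_setOf_eq] at hy
    by_contra h0
    simp only [mem_singleton_iff] at h0
    exact hy (by simp [hh, h0])
  have hl : IntegrableOn (fun y : ℝ => Real.log y / (1 - y)) (Icc 0 x) volume := by
    have hlog := integrableOn_log_Icc hx0 hx1
    have hc : ContinuousOn (fun y : ℝ => (1 - y)⁻¹) (Icc 0 x) := by
      apply ContinuousOn.inv₀ (continuous_const.sub continuous_id).continuousOn
      intro y hy
      have : y < 1 := lt_of_le_of_lt hy.2 hx1
      intro hc; simp only [Pi.sub_apply, id] at hc; linarith
    have := hlog.mul_continuousOn_of_subset hc measurableSet_Icc isCompact_Icc subset_rfl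
    simpa [div_eq_mul_inv] using this
  exact hg.add hl

lemma intervalIntegrable_dlf {x : ℝ} (hx0 : 0 ≤ x) (hx1 : x < 1) :
    IntervalIntegrable dlf volume 0 x :=
  (intervalIntegrable_iff_integrableOn_Icc_of_le hx0).mpr (integrableOn_dlf hx0 hx1)

lemma continuousAt_dlf {x : ℝ} (hx0 : 0 < x) (hx1 : x < 1) : ContinuousAt dlf x := by
  have h1 : (1:ℝ) - x ≠ 0 := by intro h; linarith
  have h0 : x ≠ 0 := ne_of_gt hx0
  exact (((Real.continuousAt_log h1).comp
      ((continuous_const.sub continuous_id).continuousAt)).div continuousAt_id h0).add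
    ((Real.continuousAt_log h0).div ((continuous_const.sub continuous_id).continuousAt) h1)

lemma hasDerivAt_rogersL {x : ℝ} (hx0 : 0 < x) (hx1 : x < 1) :
    HasDerivAt rogersL (-(1 / 2) * dlf x) x := by
  have hint : IntervalIntegrable dlf volume 0 x := intervalIntegrable_dlf hx0.le hx1
  have hmeas : StronglyMeasurableAtFilter dlf (𝓝 x) volume := by
    refine ContinuousAt.stronglyMeasurableAtFilter isOpen_Ioo ?_ x ⟨hx0, hx1⟩
    intro z hz
    exact continuousAt_dlf hz.1 hz.2
  have := (intervalIntegral.integral_hasDerivAt_right hint hmeas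
    (continuousAt_dlf hx0 hx1)).const_mul (-(1/2) : ℝ)
  show HasDerivAt (fun u : ℝ =>
    -(1 / 2) * ∫ y in (0:ℝ)..u, (Real.log (1 - y) / y + Real.log y / (1 - y))) _ x
  exact this

lemma rogersL_zero : rogersL 0 = 0 := by simp [rogersL]

lemma continuousWithinAt_rogersL_zero :
    ContinuousWithinAt rogersL (Icc 0 (1/2)) 0 := by
  have hint : IntegrableOn dlf (uIcc 0 (1/2)) volume := by
    rw [uIcc_of_le (by norm_num : (0:ℝ) ≤ 1/2)]
    exact integrableOn_dlf (by norm_num) (by norm_num)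
  have hc := (intervalIntegral.continuousOn_primitive_interval hint).const_smul (-(1/2) : ℝ)
  have : ContinuousOn rogersL (uIcc 0 (1/2)) := by
    refine hc.congr ?_
    intro z hz
    simp [rogersL, dlf, smul_eq_mul]
  rw [uIcc_of_le (by norm_num : (0:ℝ) ≤ 1/2)] at this
  exact this 0 (by norm_num)

set_option maxHeartbeats 2000000 in
lemma hasDerivAt_Phi (y₂ : ℝ) (h2 : 0 < y₂) {t : ℝ} (ht : 0 < t) :
    HasDerivAt (fun t => rogersL (t / (1 + t)) + rogersL (y₂ * (1 + t) / (1 + y₂ + t * y₂))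
      - rogersL (t / ((1 + t) * (1 + y₂))) - rogersL (t * y₂ / (1 + y₂ + t * y₂))
      - rogersL (y₂ / (1 + y₂))) 0 t := by
  have h1t : (0:ℝ) < 1 + t := by linarith
  have h1y : (0:ℝ) < 1 + y₂ := by linarith
  have hQ : (0:ℝ) < 1 + y₂ + t * y₂ := by nlinarith
  have h1t' : (1:ℝ) + t ≠ 0 := ne_of_gt h1t
  have h1y' : (1:ℝ) + y₂ ≠ 0 := ne_of_gt h1y
  have hQ' : (1:ℝ) + y₂ + t * y₂ ≠ 0 := ne_of_gt hQ
  have ht' : t ≠ 0 := ne_of_gt ht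
  have hy' : y₂ ≠ 0 := ne_of_gt h2
  -- the four arguments are in (0,1)
  have ha0 : 0 < t / (1 + t) := div_pos ht h1t
  have ha1 : t / (1 + t) < 1 := (div_lt_one h1t).mpr (by linarith)
  have hb0 : 0 < y₂ * (1 + t) / (1 + y₂ + t * y₂) := div_pos (by positivity) hQ
  have hb1 : y₂ * (1 + t) / (1 + y₂ + t * y₂) < 1 := (div_lt_one hQ).mpr (by nlinarith)
  have hc0 : 0 < t / ((1 + t) * (1 + y₂)) := div_pos ht (by positivity)
  have hc1 : t / ((1 + t) * (1 + y₂)) < 1 := (div_lt_one (by positivity)).mpr (by nlinarith)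
  have hd0 : 0 < t * y₂ / (1 + y₂ + t * y₂) := div_pos (by positivity) hQ
  have hd1 : t * y₂ / (1 + y₂ + t * y₂) < 1 := (div_lt_one hQ).mpr (by nlinarith)
  -- derivatives of the inner rational functions
  have hu1 : HasDerivAt (fun t : ℝ => t / (1 + t))
      ((1 * (1 + t) - t * (0 + 1)) / (1 + t) ^ 2) t :=
    (hasDerivAt_id t).div ((hasDerivAt_const t 1).add (hasDerivAt_id t)) h1t'
  have hu2 : HasDerivAt (fun t : ℝ => y₂ * (1 + t) / (1 + y₂ + t * y₂))
      (((0 * (1 + t) + y₂ * (0 + 1)) * (1 + y₂ + t * y₂) - y₂ * (1 + t) * (0 + (1 * y₂ + t * 0)))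
        / (1 + y₂ + t * y₂) ^ 2) t := by
    exact ((hasDerivAt_const t y₂).mul ((hasDerivAt_const t 1).add (hasDerivAt_id t))).div
      (((hasDerivAt_const t (1 + y₂)).add ((hasDerivAt_id t).mul (hasDerivAt_const t y₂)))) hQ'
  have hu3 : HasDerivAt (fun t : ℝ => t / ((1 + t) * (1 + y₂)))
      ((1 * ((1 + t) * (1 + y₂)) - t * ((0 + 1) * (1 + y₂) + (1 + t) * 0))
        / ((1 + t) * (1 + y₂)) ^ 2) t :=
    (hasDerivAt_id t).div
      ((((hasDerivAt_const t 1).add (hasDerivAt_id t)).mul (hasDerivAt_const t (1 + y₂))))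
      (by positivity)
  have hu4 : HasDerivAt (fun t : ℝ => t * y₂ / (1 + y₂ + t * y₂))
      (((1 * y₂ + t * 0) * (1 + y₂ + t * y₂) - t * y₂ * (0 + (1 * y₂ + t * 0)))
        / (1 + y₂ + t * y₂) ^ 2) t :=
    ((hasDerivAt_id t).mul (hasDerivAt_const t y₂)).div
      (((hasDerivAt_const t (1 + y₂)).add ((hasDerivAt_id t).mul (hasDerivAt_const t y₂)))) hQ'
  have D1 := (hasDerivAt_rogersL ha0 ha1).comp t hu1
  have D2 := (hasDerivAt_rogersL hb0 hb1).comp t hu2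
  have D3 := (hasDerivAt_rogersL hc0 hc1).comp t hu3
  have D4 := (hasDerivAt_rogersL hd0 hd1).comp t hu4
  simp only [Function.comp_def] at D1 D2 D3 D4
  have hsum := (((D1.add D2).sub D3).sub D4).sub
    (hasDerivAt_const t (rogersL (y₂ / (1 + y₂))))
  convert hsum using 1
  · rfl
  · rfl
  · rfl
  simp only [dlf]
  rw [show (1:ℝ) - t / (1 + t) = 1 / (1 + t) by field_simp; ring,
      show (1:ℝ) - y₂ * (1 + t) / (1 + y₂ + t * y₂) = 1 / (1 + y₂ + t * y₂) by field_simp; ring,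
      show (1:ℝ) - t / ((1 + t) * (1 + y₂)) = (1 + y₂ + t * y₂) / ((1 + t) * (1 + y₂)) by
        field_simp; ring,
      show (1:ℝ) - t * y₂ / (1 + y₂ + t * y₂) = (1 + y₂) / (1 + y₂ + t * y₂) by
        field_simp; ring]
  rw [Real.log_div ht' h1t', Real.log_div one_ne_zero h1t', Real.log_one,
      Real.log_div (mul_ne_zero hy' h1t') hQ',
      Real.log_div one_ne_zero hQ',
      Real.log_div ht' (mul_ne_zero h1t' h1y'),
      Real.log_div hQ' (mul_ne_zero h1t' h1y'),
      Real.log_div (mul_ne_zero ht' hy') hQ',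
      Real.log_div h1y' hQ',
      Real.log_mul hy' h1t', Real.log_mul h1t' h1y', Real.log_mul ht' hy']
  generalize Real.log t = A
  generalize Real.log (1 + t) = B
  generalize Real.log (1 + y₂) = C
  generalize Real.log (1 + y₂ + t * y₂) = D
  generalize Real.log y₂ = E
  simp only [Real.log_one]
  field_simp
  ring

/-- Classical dilogarithm identity of type `A₂`, signed form. -/
theorem dilogarithm_identity_A2_signed (y₁ y₂ : ℝ) (h1 : 0 < y₁) (h2 : 0 < y₂) :
    rogersL (y₁ / (1 + y₁)) + rogersL (y₂ * (1 + y₁) / (1 + y₂ + y₁ * y₂))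
      - rogersL (y₁ / ((1 + y₁) * (1 + y₂))) - rogersL (y₁ * y₂ / (1 + y₂ + y₁ * y₂))
      - rogersL (y₂ / (1 + y₂)) = 0 := by
  set Φ : ℝ → ℝ := fun t => rogersL (t / (1 + t)) + rogersL (y₂ * (1 + t) / (1 + y₂ + t * y₂))
      - rogersL (t / ((1 + t) * (1 + y₂))) - rogersL (t * y₂ / (1 + y₂ + t * y₂))
      - rogersL (y₂ / (1 + y₂)) with hΦ
  show Φ y₁ = 0
  have h1y : (0:ℝ) < 1 + y₂ := by linarith
  have hconst : ∀ s, 0 < s → s ≤ y₁ → Φ y₁ = Φ s := by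
    intro s hs hsy
    have hcont : ContinuousOn Φ (Icc s y₁) := by
      intro x hx
      exact ((hasDerivAt_Phi y₂ h2 (lt_of_lt_of_le hs hx.1)).continuousAt).continuousWithinAt
    have hder : ∀ x ∈ Ico s y₁, HasDerivWithinAt Φ 0 (Ici x) x := fun x hx =>
      (hasDerivAt_Phi y₂ h2 (lt_of_lt_of_le hs hx.1)).hasDerivWithinAt
    exact constant_of_has_deriv_right_zero hcont hder y₁ ⟨hsy, le_refl _⟩
  -- limit as t → 0⁺
  have hmem : Ioc (0:ℝ) 1 ∈ 𝓝[>] (0:ℝ) :=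
    Ioc_mem_nhdsGT_of_mem ⟨le_refl 0, zero_lt_one⟩
  have haux : ∀ u : ℝ → ℝ, (∀ t ∈ Ioc (0:ℝ) 1, u t ∈ Icc (0:ℝ) (1/2)) →
      Tendsto u (𝓝[>] (0:ℝ)) (𝓝 0) →
      Tendsto (fun t => rogersL (u t)) (𝓝[>] (0:ℝ)) (𝓝 0) := by
    intro u humem hu0
    have : Tendsto u (𝓝[>] (0:ℝ)) (𝓝[Icc 0 (1/2)] 0) := by
      refine tendsto_nhdsWithin_iff.mpr ⟨hu0, ?_⟩
      filter_upwards [hmem] with t ht using humem t ht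
    have := (continuousWithinAt_rogersL_zero).tendsto.comp this
    simpa [rogersL_zero, Function.comp_def] using this
  have T1 : Tendsto (fun t : ℝ => rogersL (t / (1 + t))) (𝓝[>] (0:ℝ)) (𝓝 0) := by
    refine haux _ ?_ ?_
    · intro t ht
      have h1t : (0:ℝ) < 1 + t := by linarith [ht.1]
      refine ⟨le_of_lt (div_pos ht.1 h1t), ?_⟩
      rw [div_le_iff₀ h1t]; linarith [ht.2]
    · have : ContinuousAt (fun t : ℝ => t / (1 + t)) 0 := by
        apply ContinuousAt.div continuousAt_id (by fun_prop)
        norm_num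
      have := this.tendsto.mono_left (nhdsWithin_le_nhds (s := Set.Ioi (0:ℝ)))
      simpa using this
  have T3 : Tendsto (fun t : ℝ => rogersL (t / ((1 + t) * (1 + y₂)))) (𝓝[>] (0:ℝ)) (𝓝 0) := by
    refine haux _ ?_ ?_
    · intro t ht
      have h1t : (0:ℝ) < 1 + t := by linarith [ht.1]
      refine ⟨le_of_lt (div_pos ht.1 (by positivity)), ?_⟩
      rw [div_le_iff₀ (by positivity)]; nlinarith [ht.1, ht.2]
    · have : ContinuousAt (fun t : ℝ => t / ((1 + t) * (1 + y₂))) 0 := by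
        apply ContinuousAt.div continuousAt_id (by fun_prop)
        simp; positivity
      have := this.tendsto.mono_left (nhdsWithin_le_nhds (s := Set.Ioi (0:ℝ)))
      simpa using this
  have T4 : Tendsto (fun t : ℝ => rogersL (t * y₂ / (1 + y₂ + t * y₂))) (𝓝[>] (0:ℝ)) (𝓝 0) := by
    refine haux _ ?_ ?_
    · intro t ht
      have hQ : (0:ℝ) < 1 + y₂ + t * y₂ := by nlinarith [ht.1]
      refine ⟨le_of_lt (div_pos (mul_pos ht.1 h2) hQ), ?_⟩
      rw [div_le_iff₀ hQ]; nlinarith [ht.1, ht.2]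
    · have : ContinuousAt (fun t : ℝ => t * y₂ / (1 + y₂ + t * y₂)) 0 := by
        apply ContinuousAt.div (by fun_prop) (by fun_prop)
        simp; positivity
      have := this.tendsto.mono_left (nhdsWithin_le_nhds (s := Set.Ioi (0:ℝ)))
      simpa using this
  have he0 : 0 < y₂ / (1 + y₂) := div_pos h2 h1y
  have he1 : y₂ / (1 + y₂) < 1 := (div_lt_one h1y).mpr (by linarith)
  have T2 : Tendsto (fun t : ℝ => rogersL (y₂ * (1 + t) / (1 + y₂ + t * y₂))) (𝓝[>] (0:ℝ))
      (𝓝 (rogersL (y₂ / (1 + y₂)))) := by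
    have hin : Tendsto (fun t : ℝ => y₂ * (1 + t) / (1 + y₂ + t * y₂)) (𝓝[>] (0:ℝ))
        (𝓝 (y₂ / (1 + y₂))) := by
      have : ContinuousAt (fun t : ℝ => y₂ * (1 + t) / (1 + y₂ + t * y₂)) 0 := by
        apply ContinuousAt.div (by fun_prop) (by fun_prop)
        simp; positivity
      have := this.tendsto.mono_left (nhdsWithin_le_nhds (s := Set.Ioi (0:ℝ)))
      simpa using this
    exact ((hasDerivAt_rogersL he0 he1).continuousAt.tendsto).comp hin
  have hlim : Tendsto Φ (𝓝[>] (0:ℝ)) (𝓝 0) := by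
    have := ((((T1.add T2).sub T3).sub T4).sub
      (tendsto_const_nhds (x := rogersL (y₂ / (1 + y₂))) (f := 𝓝[>] (0:ℝ))))
    simpa using this
  have hlim2 : Tendsto Φ (𝓝[>] (0:ℝ)) (𝓝 (Φ y₁)) := by
    have hev : ∀ᶠ t in 𝓝[>] (0:ℝ), Φ y₁ = Φ t := by
      filter_upwards [Ioc_mem_nhdsGT_of_mem ⟨le_refl (0:ℝ), h1⟩] with t ht
      exact hconst t ht.1 ht.2
    exact tendsto_const_nhds.congr' hev
  exact tendsto_nhds_unique hlim2 hlim
end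

section
/- Semiclassical asymptotics of the quantum dilogarithm: for every real x > 0, the limit as q → 1⁻ (q real, 0 < q < 1) of (1 − q) · Σ_{k=0}^∞ log(1 + q^{2k+1} x) exists and equals (1/2)·∫₀ˣ log(1+t)/t dt, i.e. equals −Li₂(−x)/2. -/
open Real Filter MeasureTheory Set intervalIntegral

private lemma aux_log_le (t : ℝ) (ht : 0 ≤ t) : Real.log (1 + t) ≤ t := by
  have h := Real.log_le_sub_one_of_pos (show (0:ℝ) < 1 + t by linarith)
  linarith

private lemma aux_g_nonneg (t : ℝ) (ht : 0 ≤ t) : 0 ≤ Real.log (1 + t) / t :=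
  div_nonneg (Real.log_nonneg (by linarith)) ht

private lemma aux_g_le_one (t : ℝ) (ht : 0 ≤ t) : Real.log (1 + t) / t ≤ 1 := by
  rcases eq_or_lt_of_le ht with h | h
  · simp [← h]
  · rw [div_le_one h]; exact aux_log_le t ht

private lemma aux_g_intable {a b : ℝ} (ha : 0 ≤ a) (hb : 0 ≤ b) :
    IntervalIntegrable (fun t : ℝ => Real.log (1 + t) / t) volume a b := by
  rw [intervalIntegrable_iff]
  have hmeas : Measurable (fun t : ℝ => Real.log (1 + t) / t) :=
    (Real.measurable_log.comp (measurable_const.add measurable_id)).div measurable_id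
  haveI : IsFiniteMeasure (volume.restrict (Set.uIoc a b)) :=
    ⟨by rw [Measure.restrict_apply_univ]; exact measure_Ioc_lt_top⟩
  apply Integrable.mono' (integrable_const (1:ℝ)) hmeas.aestronglyMeasurable
  filter_upwards [ae_restrict_mem measurableSet_uIoc] with t ht
  have ht0 : 0 ≤ t := ((le_min ha hb).trans_lt ht.1).le
  rw [Real.norm_eq_abs, abs_of_nonneg (aux_g_nonneg t ht0)]
  exact aux_g_le_one t ht0

private lemma aux_small {a x : ℝ} (ha : 0 ≤ a) (hax : a ≤ x) :
    (∫ t in (0:ℝ)..x, Real.log (1+t)/t) - a ≤ (∫ t in a..x, Real.log (1+t)/t) ∧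
    (∫ t in a..x, Real.log (1+t)/t) ≤ ∫ t in (0:ℝ)..x, Real.log (1+t)/t := by
  have hx : 0 ≤ x := ha.trans hax
  have h1 := aux_g_intable le_rfl ha
  have h2 := aux_g_intable ha hx
  have hsplit := intervalIntegral.integral_add_adjacent_intervals h1 h2
  have hub : (∫ t in (0:ℝ)..a, Real.log (1+t)/t) ≤ a := by
    calc (∫ t in (0:ℝ)..a, Real.log (1+t)/t) ≤ ∫ _t in (0:ℝ)..a, (1:ℝ) :=
          intervalIntegral.integral_mono_on ha h1 intervalIntegrable_const
            (fun t ht => aux_g_le_one t ht.1)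
      _ = a := by simp
  have hlb : 0 ≤ ∫ t in (0:ℝ)..a, Real.log (1+t)/t :=
    intervalIntegral.integral_nonneg ha (fun t ht => aux_g_nonneg t ht.1)
  constructor <;> linarith

private lemma aux_step {a b : ℝ} (ha : 0 < a) (hab : a ≤ b) :
    Real.log (1+a) * Real.log (b/a) ≤ (∫ t in a..b, Real.log (1+t)/t) ∧
    (∫ t in a..b, Real.log (1+t)/t) ≤ Real.log (1+b) * Real.log (b/a) := by
  have hb : 0 < b := ha.trans_le hab
  have h0 : (0:ℝ) ∉ Set.uIcc a b := by
    rw [Set.uIcc_of_le hab]; intro h; exact absurd h.1 (not_le.mpr ha)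
  have hcl : ∀ c : ℝ, IntervalIntegrable (fun t => c * (1/t)) volume a b := by
    intro c
    apply ContinuousOn.intervalIntegrable
    apply ContinuousOn.mul continuousOn_const
    apply ContinuousOn.div continuousOn_const continuousOn_id
    intro t ht
    rw [Set.uIcc_of_le hab] at ht
    exact ne_of_gt (ha.trans_le ht.1)
  have hgint := aux_g_intable ha.le hb.le
  have hval : ∀ c : ℝ, (∫ t in a..b, c * (1/t)) = c * Real.log (b/a) := by
    intro c
    rw [intervalIntegral.integral_const_mul, integral_one_div h0]
  constructor
  · rw [← hval]
    apply intervalIntegral.integral_mono_on hab (hcl _) hgint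
    intro t ht
    have ht0 : 0 < t := ha.trans_le ht.1
    rw [mul_one_div]
    apply div_le_div_of_nonneg_right ?_ ht0.le
    have : Real.log (1+a) ≤ Real.log (1+t) := by gcongr <;> linarith [ht.1]
    exact this
  · rw [← hval]
    apply intervalIntegral.integral_mono_on hab hgint (hcl _)
    intro t ht
    have ht0 : 0 < t := ha.trans_le ht.1
    rw [mul_one_div]
    apply div_le_div_of_nonneg_right ?_ ht0.le
    have : Real.log (1+t) ≤ Real.log (1+b) := by gcongr <;> linarith [ht.2]
    exact this

private lemma aux_summable {q : ℝ} (hq0 : 0 < q) (hq1 : q < 1) (x : ℝ) (hx : 0 < x) (j : ℕ) :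
    Summable (fun k : ℕ => Real.log (1 + q ^ (2*k+j) * x)) := by
  apply Summable.of_nonneg_of_le
    (fun k => Real.log_nonneg (by nlinarith [pow_pos hq0 (2*k+j)]))
    (fun k => ?_) (Summable.mul_left (q^j * x)
      (summable_geometric_of_lt_one (r := q^2) (by positivity) (by nlinarith)))
  have h1 : Real.log (1 + q ^ (2*k+j) * x) ≤ q ^ (2*k+j) * x :=
    aux_log_le _ (by positivity)
  have h2 : q ^ (2*k+j) * x = q^j * x * (q^2)^k := by
    rw [pow_add, pow_mul]; ring
  exact h2 ▸ h1

private lemma aux_key (x : ℝ) (hx : 0 < x) {q : ℝ} (hq0 : 0 < q) (hq1 : q < 1) :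
    |(-2 * Real.log q) * (∑' k : ℕ, Real.log (1 + q ^ (2*k+1) * x)) -
        ∫ t in (0:ℝ)..x, Real.log (1+t)/t| ≤ (-2 * Real.log q) * Real.log (1+x) := by
  set L : ℝ := -2 * Real.log q with hLdef
  have hL : 0 < L := by have := Real.log_neg hq0 hq1; simp only [hLdef]; linarith
  set I : ℝ := ∫ t in (0:ℝ)..x, Real.log (1+t)/t with hIdef
  set a : ℕ → ℝ := fun k => q ^ (2*k) * x with hadef
  have hapos : ∀ k, 0 < a k := fun k => by positivity
  have halex : ∀ k, a k ≤ x := by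
    intro k
    have h : q ^ (2*k) ≤ 1 := pow_le_one₀ hq0.le hq1.le
    simp only [hadef]
    nlinarith
  have hamono : ∀ k, a (k+1) ≤ a k := by
    intro k
    have h : q ^ (2*(k+1)) ≤ q ^ (2*k) := pow_le_pow_of_le_one hq0.le hq1.le (by omega)
    simp only [hadef]
    nlinarith
  -- telescoping
  have hadj : ∀ n : ℕ, (∑ k ∈ Finset.range n, ∫ t in a (k+1)..a k, Real.log (1+t)/t)
      = ∫ t in a n..x, Real.log (1+t)/t := by
    intro n
    have h := intervalIntegral.sum_integral_adjacent_intervals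
      (a := a) (n := n) (f := fun t => Real.log (1+t)/t) (μ := volume)
      (fun k _ => aux_g_intable (hapos k).le (hapos (k+1)).le)
    have ha0 : a 0 = x := by simp [hadef]
    have : ∀ k, (∫ t in a (k+1)..a k, Real.log (1+t)/t)
        = -∫ t in a k..a (k+1), Real.log (1+t)/t := fun k =>
      (intervalIntegral.integral_symm _ _)
    simp_rw [this]
    rw [Finset.sum_neg_distrib, h, ha0, intervalIntegral.integral_symm, neg_neg]
  -- per-term bound
  have hterm : ∀ k : ℕ, L * Real.log (1 + a (k+1)) ≤ (∫ t in a (k+1)..a k, Real.log (1+t)/t)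
      ∧ (∫ t in a (k+1)..a k, Real.log (1+t)/t) ≤ L * Real.log (1 + a k) := by
    intro k
    have hmul : a (k+1) = a k * q^2 := by
      simp only [hadef, pow_mul, pow_succ]; ring
    have hdiv : a k / a (k+1) = (q^2)⁻¹ := by
      rw [hmul, div_mul_eq_div_div, div_self (hapos k).ne', one_div]
    have hlog : Real.log (a k / a (k+1)) = L := by
      rw [hdiv, Real.log_inv, Real.log_pow]; push_cast; ring
    have := aux_step (hapos (k+1)) (hamono k)
    constructor
    · calc L * Real.log (1 + a (k+1)) = Real.log (1 + a (k+1)) * Real.log (a k / a (k+1)) := by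
            rw [hlog]; ring
        _ ≤ _ := this.1
    · calc (∫ t in a (k+1)..a k, Real.log (1+t)/t)
          ≤ Real.log (1 + a k) * Real.log (a k / a (k+1)) := this.2
        _ = L * Real.log (1 + a k) := by rw [hlog]; ring
  -- summabilities
  have hsum1 := aux_summable hq0 hq1 x hx 1
  have hsum2 := aux_summable hq0 hq1 x hx 2
  have hsum0 := aux_summable hq0 hq1 x hx 0
  -- rewrite exponents: a (k+1) = q^(2k+2) x, a k = q^(2k+0) x
  have hak1 : ∀ k : ℕ, a (k+1) = q ^ (2*k+2) * x := by
    intro k; simp only [hadef]; congr 1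
  have hak0 : ∀ k : ℕ, a k = q ^ (2*k+0) * x := by
    intro k; simp only [hadef, Nat.add_zero]
  set S : ℝ := ∑' k : ℕ, Real.log (1 + q ^ (2*k+1) * x) with hSdef
  set S2 : ℝ := ∑' k : ℕ, Real.log (1 + q ^ (2*k+2) * x) with hS2def
  set S0 : ℝ := ∑' k : ℕ, Real.log (1 + q ^ (2*k+0) * x) with hS0def
  -- L * S2 ≤ I
  have hLS2 : L * S2 ≤ I := by
    have hfin : ∀ n : ℕ, L * (∑ k ∈ Finset.range n, Real.log (1 + q ^ (2*k+2) * x)) ≤ I := by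
      intro n
      calc L * (∑ k ∈ Finset.range n, Real.log (1 + q ^ (2*k+2) * x))
          = ∑ k ∈ Finset.range n, L * Real.log (1 + a (k+1)) := by
            rw [Finset.mul_sum]; exact Finset.sum_congr rfl fun k _ => by rw [hak1]
        _ ≤ ∑ k ∈ Finset.range n, ∫ t in a (k+1)..a k, Real.log (1+t)/t :=
            Finset.sum_le_sum fun k _ => (hterm k).1
        _ = ∫ t in a n..x, Real.log (1+t)/t := hadj n
        _ ≤ I := (aux_small (hapos n).le (halex n)).2
    have htend : Tendsto (fun n => L * (∑ k ∈ Finset.range n, Real.log (1 + q ^ (2*k+2) * x)))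
        atTop (nhds (L * S2)) := (hsum2.hasSum.tendsto_sum_nat).const_mul L
    exact le_of_tendsto htend (Filter.Eventually.of_forall hfin)
  -- I ≤ L * S0
  have hILS0 : I ≤ L * S0 := by
    have hfin : ∀ n : ℕ, I - a n ≤ L * S0 := by
      intro n
      have h1 : (∫ t in a n..x, Real.log (1+t)/t)
          ≤ L * (∑ k ∈ Finset.range n, Real.log (1 + q ^ (2*k+0) * x)) := by
        calc (∫ t in a n..x, Real.log (1+t)/t)
            = ∑ k ∈ Finset.range n, ∫ t in a (k+1)..a k, Real.log (1+t)/t := (hadj n).symm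
          _ ≤ ∑ k ∈ Finset.range n, L * Real.log (1 + a k) :=
              Finset.sum_le_sum fun k _ => (hterm k).2
          _ = L * (∑ k ∈ Finset.range n, Real.log (1 + q ^ (2*k+0) * x)) := by
              rw [Finset.mul_sum]; exact Finset.sum_congr rfl fun k _ => by rw [hak0]
      have h2 : (∑ k ∈ Finset.range n, Real.log (1 + q ^ (2*k+0) * x)) ≤ S0 :=
        Summable.sum_le_tsum _ (fun k _ => Real.log_nonneg (by nlinarith [pow_pos hq0 (2*k+0)])) hsum0
      have h3 := (aux_small (hapos n).le (halex n)).1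
      nlinarith [h1, h2, h3, hL]
    have htend : Tendsto (fun n : ℕ => I - a n) atTop (nhds I) := by
      have h0 : Tendsto (fun n : ℕ => a n) atTop (nhds 0) := by
        have : (fun n : ℕ => a n) = fun n => (q^2)^n * x := by
          funext n; simp only [hadef, pow_mul]
        rw [this]
        simpa using (tendsto_pow_atTop_nhds_zero_of_lt_one (by positivity)
          (by nlinarith)).mul_const x
      simpa using tendsto_const_nhds.sub h0
    exact le_of_tendsto htend (Filter.Eventually.of_forall hfin)
  -- S0 = log(1+x) + S2
  have hshift : S0 = Real.log (1+x) + S2 := by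
    rw [hS0def, Summable.tsum_eq_zero_add hsum0]
    congr 1
    norm_num
  -- S2 ≤ S ≤ S0
  have hS2S : S2 ≤ S := by
    apply Summable.tsum_le_tsum _ hsum2 hsum1
    intro k
    have : q ^ (2*k+2) ≤ q ^ (2*k+1) := pow_le_pow_of_le_one hq0.le hq1.le (by omega)
    gcongr
  have hSS0 : S ≤ S0 := by
    apply Summable.tsum_le_tsum _ hsum1 hsum0
    intro k
    have : q ^ (2*k+1) ≤ q ^ (2*k+0) := pow_le_pow_of_le_one hq0.le hq1.le (by omega)
    gcongr
  rw [abs_le]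
  constructor
  · nlinarith [mul_le_mul_of_nonneg_left hSS0 hL.le]
  · nlinarith [mul_le_mul_of_nonneg_left hS2S hL.le]


/-- Semiclassical asymptotics of the quantum dilogarithm: as `q → 1⁻`,
`(1 - q) Σ_{k≥0} log(1 + q^{2k+1} x) → (1/2) ∫₀ˣ log(1+t)/t dt = -Li₂(-x)/2`. -/
theorem quantum_dilog_semiclassical (x : ℝ) (hx : 0 < x) :
    Filter.Tendsto (fun q : ℝ => (1 - q) * ∑' k : ℕ, Real.log (1 + q ^ (2 * k + 1) * x))
      (nhdsWithin 1 (Set.Ioo (0:ℝ) 1))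
      (nhds ((1 / 2) * ∫ t in (0:ℝ)..x, Real.log (1 + t) / t)) ∧
    (1 / 2) * (∫ t in (0:ℝ)..x, Real.log (1 + t) / t) = -Li2 (-x) / 2 := by
  set I : ℝ := ∫ t in (0:ℝ)..x, Real.log (1 + t) / t with hIdef
  constructor
  · -- the limit
    have hmem : ∀ᶠ q in nhdsWithin 1 (Set.Ioo (0:ℝ) 1), q ∈ Set.Ioo (0:ℝ) 1 :=
      eventually_mem_nhdsWithin
    have hslope : Tendsto (fun q : ℝ => Real.log q / (q - 1))
        (nhdsWithin 1 (Set.Ioo (0:ℝ) 1)) (nhds 1) := by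
      have h := hasDerivAt_iff_tendsto_slope.mp (Real.hasDerivAt_log one_ne_zero)
      rw [inv_one] at h
      have h2 : Tendsto (slope Real.log 1) (nhdsWithin 1 (Set.Ioo (0:ℝ) 1)) (nhds 1) :=
        h.mono_left (nhdsWithin_mono 1 (fun q hq => ne_of_lt hq.2))
      apply h2.congr
      intro q
      simp [slope_fun_def, Real.log_one]
      ring
    have hratio : Tendsto (fun q : ℝ => (1 - q) / (-2 * Real.log q))
        (nhdsWithin 1 (Set.Ioo (0:ℝ) 1)) (nhds (1/2)) := by
      have h2 : Tendsto (fun q : ℝ => (2 * (Real.log q / (q - 1)))⁻¹)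
          (nhdsWithin 1 (Set.Ioo (0:ℝ) 1)) (nhds ((2 * 1 : ℝ))⁻¹) :=
        (hslope.const_mul 2).inv₀ (by norm_num)
      have h3 : ∀ q : ℝ, (2 * (Real.log q / (q - 1)))⁻¹ = (1 - q) / (-2 * Real.log q) := by
        intro q
        rw [neg_mul, div_neg, ← neg_div, neg_sub, mul_div_assoc', inv_div]
      have h4 : ((2 * 1 : ℝ))⁻¹ = 1/2 := by norm_num
      rw [h4] at h2
      exact h2.congr h3
    have hq1t : Tendsto (fun q : ℝ => 1 - q) (nhdsWithin 1 (Set.Ioo (0:ℝ) 1)) (nhds 0) := by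
      have h : Tendsto (fun q : ℝ => 1 - q) (nhds 1) (nhds 0) := by
        have h' : Continuous (fun q : ℝ => 1 - q) := continuous_const.sub continuous_id
        simpa using h'.tendsto (1:ℝ)
      exact h.mono_left nhdsWithin_le_nhds
    set c : ℝ := Real.log (1 + x) with hcdef
    have hglim : Tendsto (fun q : ℝ => (1 - q) / (-2 * Real.log q) * I - (1 - q) * c)
        (nhdsWithin 1 (Set.Ioo (0:ℝ) 1)) (nhds (1/2 * I)) := by
      have := (hratio.mul_const I).sub (hq1t.mul_const c)
      simpa using this
    have hhlim : Tendsto (fun q : ℝ => (1 - q) / (-2 * Real.log q) * I + (1 - q) * c)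
        (nhdsWithin 1 (Set.Ioo (0:ℝ) 1)) (nhds (1/2 * I)) := by
      have := (hratio.mul_const I).add (hq1t.mul_const c)
      simpa using this
    apply tendsto_of_tendsto_of_tendsto_of_le_of_le' hglim hhlim
    · filter_upwards [hmem] with q hq
      obtain ⟨hq0, hq1⟩ := hq
      have hkey := aux_key x hx hq0 hq1
      set L : ℝ := -2 * Real.log q with hLdef
      have hL : 0 < L := by
        have := Real.log_neg hq0 hq1; simp only [hLdef]; linarith
      have hLne : L ≠ 0 := ne_of_gt hL
      set S : ℝ := ∑' k : ℕ, Real.log (1 + q ^ (2 * k + 1) * x) with hSdef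
      obtain ⟨h1, h2⟩ := abs_le.mp hkey
      have hq1' : (0:ℝ) ≤ 1 - q := by linarith
      have hS1 : (I - L * c) / L ≤ S := (div_le_iff₀ hL).mpr (by linarith)
      have := mul_le_mul_of_nonneg_left hS1 hq1'
      have heq : (1 - q) * ((I - L * c) / L) = (1 - q) / L * I - (1 - q) * c := by
        field_simp
      linarith [heq ▸ this]
    · filter_upwards [hmem] with q hq
      obtain ⟨hq0, hq1⟩ := hq
      have hkey := aux_key x hx hq0 hq1
      set L : ℝ := -2 * Real.log q with hLdef
      have hL : 0 < L := by
        have := Real.log_neg hq0 hq1; simp only [hLdef]; linarith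
      have hLne : L ≠ 0 := ne_of_gt hL
      set S : ℝ := ∑' k : ℕ, Real.log (1 + q ^ (2 * k + 1) * x) with hSdef
      obtain ⟨h1, h2⟩ := abs_le.mp hkey
      have hq1' : (0:ℝ) ≤ 1 - q := by linarith
      have hS1 : S ≤ (I + L * c) / L := (le_div_iff₀ hL).mpr (by linarith)
      have := mul_le_mul_of_nonneg_left hS1 hq1'
      have heq : (1 - q) * ((I + L * c) / L) = (1 - q) / L * I + (1 - q) * c := by
        field_simp
      linarith [heq ▸ this]
  · -- the integral identity
    have h1 : (∫ t in (0:ℝ)..x, Real.log (1 - (-t)) / (-t))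
        = ∫ y in -x..-(0:ℝ), Real.log (1 - y) / y :=
      intervalIntegral.integral_comp_neg (fun y => Real.log (1 - y) / y)
    have h2 : (∫ t in (0:ℝ)..x, Real.log (1 - (-t)) / (-t)) = -I := by
      rw [hIdef, ← intervalIntegral.integral_neg]
      apply intervalIntegral.integral_congr
      intro t _
      show Real.log (1 - -t) / -t = -(Real.log (1 + t) / t)
      rw [div_neg, sub_neg_eq_add]
    have h3 : (∫ y in (0:ℝ)..(-x), Real.log (1 - y) / y) = I := by
      have h4 : (∫ y in -x..-(0:ℝ), Real.log (1 - y) / y)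
          = -∫ y in (0:ℝ)..(-x), Real.log (1 - y) / y := by
        rw [neg_zero, intervalIntegral.integral_symm]
      rw [h4] at h1
      rw [h2] at h1
      linarith
    rw [Li2, h3]
    ring
end

section
/- Pentagon identity for the quantum dilogarithm in a Banach algebra: let 𝒜 be a complex unital Banach algebra, q ∈ ℂ with 0 < |q| < 1, and U, V ∈ 𝒜 with U·V = q²·V·U, ‖U‖ < 1 and ‖V‖ < 1. Then Ψ_q(U)·Ψ_q(V) = Ψ_q(V)·Ψ_q(q^{−1}·U·V)·Ψ_q(U). (Note ‖q^{−1}UV‖ ≤ |q|^{−1}‖U‖‖V‖ < 1/|q|, so all three series converge.) -/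
open Finset Filter

/-! ### Auxiliary scalar lemmas for the quantum dilogarithm coefficients -/

/-- The coefficients of the quantum dilogarithm series. -/
noncomputable def qc (q : ℂ) (n : ℕ) : ℂ :=
  (-q) ^ n / ∏ k ∈ Finset.range n, (1 - q ^ (2 * (k + 1)))

section Scalars
variable {q : ℂ}

lemma qfactor_ne (hq1 : ‖q‖ < 1) (k : ℕ) : 1 - q ^ (2 * (k + 1)) ≠ 0 := by
  intro h
  have h2 : q ^ (2 * (k + 1)) = 1 := by linear_combination -h
  have h3 : ‖q ^ (2 * (k + 1))‖ < 1 := by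
    rw [norm_pow]
    exact pow_lt_one₀ (norm_nonneg q) hq1 (by positivity)
  rw [h2] at h3; simp at h3

lemma qprod_ne (hq1 : ‖q‖ < 1) (n : ℕ) : ∏ k ∈ Finset.range n, (1 - q ^ (2 * (k + 1))) ≠ 0 :=
  Finset.prod_ne_zero_iff.2 fun k _ => qfactor_ne hq1 k

lemma qc_rec (hq1 : ‖q‖ < 1) (n : ℕ) :
    (1 - q ^ (2 * (n + 1))) * qc q (n + 1) = -q * qc q n := by
  unfold qc
  rw [Finset.prod_range_succ, pow_succ]
  have h1 := qprod_ne hq1 n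
  have h2 := qfactor_ne hq1 n
  field_simp

/-- The key `q`-Vandermonde-type identity for the coefficients. -/
lemma qc_key (hq1 : ‖q‖ < 1) (b a : ℕ) :
    ∑ k ∈ Finset.range (min a b + 1), qc q (a - k) * qc q k * qc q (b - k) * q ^ (k ^ 2)
      = q ^ (2 * (a * b)) * qc q a * qc q b := by
  induction a with
  | zero => simp [qc]
  | succ a ih =>
    apply mul_left_cancel₀ (qfactor_ne hq1 a)
    set D : ℂ := 1 - q ^ (2 * (a + 1)) with hD
    set F : ℕ → ℂ := fun k => qc q (a + 1 - k) * qc q k * qc q (b - k) * q ^ (k ^ 2) with hF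
    set G : ℕ → ℂ := fun k => -q * q ^ (2 * k) * qc q (a - k) * qc q k * qc q (b - k) * q ^ (k ^ 2) with hG
    set H : ℕ → ℂ := fun k => (1 - q ^ (2 * k)) * qc q (a + 1 - k) * qc q k * qc q (b - k) * q ^ (k ^ 2) with hH
    set X : ℕ → ℂ := fun k => -(q ^ (2 * b + 1)) * (qc q (a - k) * qc q k * qc q (b - k) * q ^ (k ^ 2)) with hX
    have hsplit : ∀ k ≤ a, D * F k = G k + H k := by
      intro k hk
      simp only [hG, hH, hF, hD]
      rw [show a + 1 - k = (a - k) + 1 by omega, show 2 * (a + 1) = 2 * ((a - k) + k + 1) by omega]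
      linear_combination (q ^ (2 * k) * qc q k * qc q (b - k) * q ^ (k ^ 2)) * qc_rec hq1 (a - k)
    have hHsucc : ∀ k < b, H (k + 1) = -G k + X k := by
      intro k hk
      simp only [hG, hH, hX]
      have h1 := qc_rec hq1 k
      have h2 := qc_rec hq1 (b - 1 - k)
      rw [show a + 1 - (k + 1) = a - k by omega, show b - (k + 1) = b - 1 - k by omega,
        show b - k = b - 1 - k + 1 by omega,
        show 2 * b + 1 = 2 * ((b - 1 - k) + k + 1) + 1 by omega]
      linear_combination (q ^ ((k + 1) ^ 2) * qc q (a - k) * qc q (b - 1 - k)) * h1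
        - (q ^ (k ^ 2 + 2 * k + 1) * qc q (a - k) * qc q k) * h2
    have hH0 : H 0 = 0 := by simp [hH]
    have final : D * (q ^ (2 * ((a + 1) * b)) * qc q (a + 1) * qc q b)
        = -(q ^ (2 * b + 1)) * (q ^ (2 * (a * b)) * qc q a * qc q b) := by
      simp only [hD]
      linear_combination (q ^ (2 * ((a + 1) * b)) * qc q b) * qc_rec hq1 a
    rcases le_or_gt b a with hba | hab
    · rw [min_eq_right hba] at ih
      rw [min_eq_right (by omega : b ≤ a + 1), Finset.mul_sum]
      have e1 : ∑ k ∈ Finset.range (b + 1), D * F k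
          = ∑ k ∈ Finset.range (b + 1), G k + ∑ k ∈ Finset.range (b + 1), H k := by
        rw [← Finset.sum_add_distrib]
        exact Finset.sum_congr rfl fun k hk => hsplit k (by simp at hk; omega)
      have e2 : ∑ k ∈ Finset.range (b + 1), H k = ∑ k ∈ Finset.range b, H (k + 1) := by
        rw [Finset.sum_range_succ', hH0, add_zero]
      have e3 : ∑ k ∈ Finset.range b, H (k + 1)
          = ∑ k ∈ Finset.range b, (-G k) + ∑ k ∈ Finset.range b, X k := by
        rw [← Finset.sum_add_distrib]
        exact Finset.sum_congr rfl fun k hk => hHsucc k (by simpa using hk)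
      have e4 : ∑ k ∈ Finset.range (b + 1), G k = ∑ k ∈ Finset.range b, G k + G b :=
        Finset.sum_range_succ G b
      have e5 : ∑ k ∈ Finset.range b, (-G k) = -∑ k ∈ Finset.range b, G k := by
        simp
      have e6 : ∑ k ∈ Finset.range (b + 1), X k = ∑ k ∈ Finset.range b, X k + X b :=
        Finset.sum_range_succ X b
      have e7 : G b = X b := by simp only [hG, hX]; ring
      have e8 : ∑ k ∈ Finset.range (b + 1), X k
          = -(q ^ (2 * b + 1)) * (q ^ (2 * (a * b)) * qc q a * qc q b) := by
        simp only [hX, ← Finset.mul_sum, ih]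
      linear_combination e1 + e2 + e3 + e4 + e5 - e6 + e7 + e8 - final
    · rw [min_eq_left hab.le] at ih
      rw [min_eq_left (by omega : a + 1 ≤ b), Finset.mul_sum]
      have f1 : ∑ k ∈ Finset.range (a + 1 + 1), D * F k
          = ∑ k ∈ Finset.range (a + 1), D * F k + D * F (a + 1) :=
        Finset.sum_range_succ _ (a + 1)
      have f2 : ∑ k ∈ Finset.range (a + 1), D * F k
          = ∑ k ∈ Finset.range (a + 1), G k + ∑ k ∈ Finset.range (a + 1), H k := by
        rw [← Finset.sum_add_distrib]
        exact Finset.sum_congr rfl fun k hk => hsplit k (by simp at hk; omega)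
      have f3 : D * F (a + 1) = H (a + 1) := by
        simp only [hF, hH, hD]
        rw [show a + 1 - (a + 1) = 0 by omega]
        ring
      have f4 : ∑ k ∈ Finset.range (a + 1 + 1), H k
          = ∑ k ∈ Finset.range (a + 1), H k + H (a + 1) :=
        Finset.sum_range_succ H (a + 1)
      have f5 : ∑ k ∈ Finset.range (a + 1 + 1), H k = ∑ k ∈ Finset.range (a + 1), H (k + 1) := by
        rw [Finset.sum_range_succ', hH0, add_zero]
      have f6 : ∑ k ∈ Finset.range (a + 1), H (k + 1)
          = ∑ k ∈ Finset.range (a + 1), (-G k) + ∑ k ∈ Finset.range (a + 1), X k := by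
        rw [← Finset.sum_add_distrib]
        exact Finset.sum_congr rfl fun k hk => hHsucc k (by simp at hk; omega)
      have f7 : ∑ k ∈ Finset.range (a + 1), (-G k) = -∑ k ∈ Finset.range (a + 1), G k := by
        simp
      have f8 : ∑ k ∈ Finset.range (a + 1), X k
          = -(q ^ (2 * b + 1)) * (q ^ (2 * (a * b)) * qc q a * qc q b) := by
        simp only [hX, ← Finset.mul_sum, ih]
      linear_combination f1 + f2 + f3 - f4 + f5 + f6 + f7 + f8 - final

end Scalars

section Summability
variable {q : ℂ}

lemma qc_summable {A : Type*} [NormedRing A] [NormedAlgebra ℂ A] (hq1 : ‖q‖ < 1)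
    {W : A} (hW : ‖q‖ * ‖W‖ < 1) : Summable fun n : ℕ => ‖qc q n • W ^ n‖ := by
  set r : ℝ := (1 + ‖q‖ * ‖W‖) / 2 with hr
  have hqW : 0 ≤ ‖q‖ * ‖W‖ := by positivity
  have hr1 : r < 1 := by simp only [hr]; linarith
  have hr0 : 0 < r := by simp only [hr]; linarith
  have hlt : ‖q‖ * ‖W‖ / r < 1 := by rw [div_lt_one hr0]; simp only [hr]; linarith
  have htend : Tendsto (fun n : ℕ => ‖(1 : ℂ) - q ^ (2 * (n + 1))‖) atTop (nhds 1) := by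
    have h0 : Tendsto (fun n : ℕ => q ^ (2 * (n + 1))) atTop (nhds 0) := by
      have := tendsto_pow_atTop_nhds_zero_of_norm_lt_one (x := q) hq1
      have hmono : Tendsto (fun n : ℕ => 2 * (n + 1)) atTop atTop :=
        tendsto_atTop_mono (fun n => by simp only [id_eq]; omega) tendsto_id
      exact this.comp hmono
    have h1 : Tendsto (fun n : ℕ => (1 : ℂ) - q ^ (2 * (n + 1))) atTop (nhds 1) := by
      simpa using tendsto_const_nhds.sub h0
    simpa using h1.norm
  have hev : ∀ᶠ n : ℕ in atTop, ‖q‖ * ‖W‖ / r < ‖(1 : ℂ) - q ^ (2 * (n + 1))‖ :=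
    htend.eventually (eventually_gt_nhds hlt)
  apply summable_of_ratio_norm_eventually_le hr1
  filter_upwards [hev] with n hn
  rw [Real.norm_of_nonneg (norm_nonneg _), Real.norm_of_nonneg (norm_nonneg _)]
  have hrec := qc_rec hq1 n
  have hpos : (0 : ℝ) < ‖(1 : ℂ) - q ^ (2 * (n + 1))‖ := lt_of_le_of_lt (by positivity) hn
  have hqc : ‖qc q (n + 1)‖ = ‖q‖ * ‖qc q n‖ / ‖(1 : ℂ) - q ^ (2 * (n + 1))‖ := by
    rw [eq_div_iff hpos.ne', mul_comm, ← norm_mul, hrec, norm_mul, norm_neg]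
  calc ‖qc q (n + 1) • W ^ (n + 1)‖ = ‖qc q (n + 1)‖ * ‖W ^ n * W‖ := by
        rw [norm_smul, pow_succ]
    _ ≤ ‖qc q (n + 1)‖ * (‖W ^ n‖ * ‖W‖) :=
        mul_le_mul_of_nonneg_left (norm_mul_le _ _) (norm_nonneg _)
    _ = (‖q‖ * ‖W‖ / ‖(1 : ℂ) - q ^ (2 * (n + 1))‖) * (‖qc q n‖ * ‖W ^ n‖) := by
        rw [hqc]; ring
    _ ≤ r * ‖qc q n • W ^ n‖ := by
        rw [norm_smul]
        apply mul_le_mul_of_nonneg_right _ (by positivity)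
        rw [div_le_iff₀ hpos]
        calc ‖q‖ * ‖W‖ = (‖q‖ * ‖W‖ / r) * r := by field_simp
          _ ≤ ‖(1 : ℂ) - q ^ (2 * (n + 1))‖ * r :=
              mul_le_mul_of_nonneg_right hn.le hr0.le
          _ = r * ‖(1 : ℂ) - q ^ (2 * (n + 1))‖ := by ring

end Summability

section CommLemmas
variable {A : Type*} [NormedRing A] [NormedAlgebra ℂ A] {q : ℂ} {U V : A}

lemma qcommA (hUV : U * V = q ^ 2 • (V * U)) (n : ℕ) :
    U * V ^ n = q ^ (2 * n) • (V ^ n * U) := by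
  induction n with
  | zero => simp
  | succ n ih =>
    rw [pow_succ, ← mul_assoc, ih, smul_mul_assoc, mul_assoc, hUV, mul_smul_comm, smul_smul,
      ← mul_assoc, ← pow_add]
    congr 1

lemma qcommB (hUV : U * V = q ^ 2 • (V * U)) (m n : ℕ) :
    U ^ m * V ^ n = q ^ (2 * (m * n)) • (V ^ n * U ^ m) := by
  induction m with
  | zero => simp
  | succ m ih =>
    rw [pow_succ, mul_assoc, qcommA hUV n, mul_smul_comm, ← mul_assoc, ih, smul_mul_assoc,
      smul_smul, mul_assoc, ← pow_succ, ← pow_add]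
    ring_nf

lemma qmidpow (hq : q ≠ 0) (hUV : U * V = q ^ 2 • (V * U)) (k : ℕ) :
    (q⁻¹ • (U * V)) ^ k = q ^ (k ^ 2) • (V ^ k * U ^ k) := by
  induction k with
  | zero => simp
  | succ k ih =>
    have h := qcommB hUV (k + 1) 1
    rw [pow_one] at h
    rw [pow_succ, ih, smul_mul_assoc, mul_smul_comm, smul_smul, mul_assoc,
      ← mul_assoc (U ^ k), ← pow_succ, h, mul_smul_comm, smul_smul, ← mul_assoc (V ^ k),
      ← pow_succ]
    congr 1
    field_simp
    ring

end CommLemmas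

/-- The reindexing equivalence used to regroup the triple series. -/
def pentEquiv : (Σ p : ℕ × ℕ, Fin (min p.2 p.1 + 1)) ≃ (ℕ × ℕ) × ℕ where
  toFun x := ((x.1.2 - x.2.1, x.2.1), x.1.1 - x.2.1)
  invFun z := ⟨(z.1.2 + z.2, z.1.1 + z.1.2), ⟨z.1.2, by omega⟩⟩
  left_inv := by
    rintro ⟨⟨m, n⟩, ⟨k, hk⟩⟩
    refine Sigma.ext ?_ ?_
    · simp only [Prod.mk.injEq]
      omega
    · rw [Fin.heq_ext_iff (by simp only [Prod.mk.injEq]; omega)]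
  right_inv := by
    rintro ⟨⟨n, k⟩, m⟩
    show (((n + k) - k, k), (k + m) - k) = ((n, k), m)
    have e1 : (n + k) - k = n := by omega
    have e2 : (k + m) - k = m := by omega
    rw [e1, e2]

/-- The quantum dilogarithm `Ψ_q(W) = Σₙ (-q)ⁿ Wⁿ / ∏_{k=1}^n (1 - q^{2k})` of an
element `W` of a complex unital Banach algebra, for `0 < |q| < 1` and `‖W‖ < 1/|q|`. -/
noncomputable def quantumPsiB {A : Type*} [NormedRing A] [NormedAlgebra ℂ A]
    (q : ℂ) (W : A) : A :=
  ∑' n : ℕ, ((-q) ^ n / ∏ k ∈ Finset.range n, (1 - q ^ (2 * (k + 1)))) • W ^ n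

set_option maxHeartbeats 1000000 in
/-- Pentagon identity for the quantum dilogarithm in a complex unital Banach algebra:
if `UV = q² VU`, then `Ψ_q(U) Ψ_q(V) = Ψ_q(V) Ψ_q(q⁻¹ UV) Ψ_q(U)`. -/
theorem quantumPsiB_pentagon {A : Type*} [NormedRing A] [NormedAlgebra ℂ A]
    [CompleteSpace A] (q : ℂ) (hq0 : 0 < ‖q‖) (hq1 : ‖q‖ < 1) (U V : A)
    (hUV : U * V = q ^ 2 • (V * U)) (hU : ‖U‖ < 1) (hV : ‖V‖ < 1) :
    quantumPsiB q U * quantumPsiB q V =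
      quantumPsiB q V * quantumPsiB q (q⁻¹ • (U * V)) * quantumPsiB q U := by
  have hq : q ≠ 0 := by
    intro h; rw [h] at hq0; simp at hq0
  set M : A := q⁻¹ • (U * V) with hM
  have hUnorm : ‖q‖ * ‖U‖ < 1 := by nlinarith [norm_nonneg U, norm_nonneg q]
  have hVnorm : ‖q‖ * ‖V‖ < 1 := by nlinarith [norm_nonneg V, norm_nonneg q]
  have hMnorm : ‖q‖ * ‖M‖ < 1 := by
    have h1 : ‖M‖ = ‖q‖⁻¹ * ‖U * V‖ := by rw [hM, norm_smul, norm_inv]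
    have h2 : ‖q‖ * ‖M‖ = ‖U * V‖ := by
      rw [h1, ← mul_assoc, mul_inv_cancel₀ (ne_of_gt hq0), one_mul]
    rw [h2]
    calc ‖U * V‖ ≤ ‖U‖ * ‖V‖ := norm_mul_le _ _
      _ < 1 := by nlinarith [norm_nonneg U, norm_nonneg V]
  have sU : Summable fun n : ℕ => ‖qc q n • U ^ n‖ := qc_summable hq1 hUnorm
  have sV : Summable fun n : ℕ => ‖qc q n • V ^ n‖ := qc_summable hq1 hVnorm
  have sM : Summable fun n : ℕ => ‖qc q n • M ^ n‖ := qc_summable hq1 hMnorm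
  have psiU : quantumPsiB q U = ∑' n : ℕ, qc q n • U ^ n := rfl
  have psiV : quantumPsiB q V = ∑' n : ℕ, qc q n • V ^ n := rfl
  have psiM : quantumPsiB q M = ∑' n : ℕ, qc q n • M ^ n := rfl
  -- The left-hand side as a double series
  have termL : ∀ z : ℕ × ℕ, (qc q z.1 • U ^ z.1) * (qc q z.2 • V ^ z.2)
      = (∑ k ∈ Finset.range (min z.2 z.1 + 1),
          qc q (z.2 - k) * qc q k * qc q (z.1 - k) * q ^ (k ^ 2)) • (V ^ z.2 * U ^ z.1) := by
    intro z
    rw [smul_mul_smul_comm, qcommB hUV z.1 z.2, smul_smul, qc_key hq1 z.1 z.2]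
    congr 1
    ring
  -- The right-hand side as a triple series
  have termR : ∀ z : (ℕ × ℕ) × ℕ,
      ((qc q z.1.1 • V ^ z.1.1) * (qc q z.1.2 • M ^ z.1.2)) * (qc q z.2 • U ^ z.2)
      = (qc q z.1.1 * qc q z.1.2 * qc q z.2 * q ^ (z.1.2 ^ 2))
          • (V ^ (z.1.1 + z.1.2) * U ^ (z.1.2 + z.2)) := by
    intro z
    rw [hM, qmidpow hq hUV z.1.2, smul_smul, smul_mul_smul_comm, smul_mul_smul_comm]
    congr 1
    · ring
    · rw [pow_add, pow_add]
      noncomm_ring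
  -- assemble both sides
  rw [psiU, psiV, psiM, tsum_mul_tsum_of_summable_norm sU sV,
    tsum_mul_tsum_of_summable_norm sV sM,
    tsum_mul_tsum_of_summable_norm (sV.mul_norm sM) sU]
  rw [tsum_congr termL, tsum_congr termR]
  -- reindex the right-hand side
  set f : (ℕ × ℕ) × ℕ → A := fun z =>
    (qc q z.1.1 * qc q z.1.2 * qc q z.2 * q ^ (z.1.2 ^ 2))
      • (V ^ (z.1.1 + z.1.2) * U ^ (z.1.2 + z.2)) with hf
  have sumf : Summable f := by
    have h := summable_mul_of_summable_norm (R := A) (sV.mul_norm sM) sU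
    exact h.congr termR
  have step1 : ∑' z : (ℕ × ℕ) × ℕ, f z
      = ∑' x : (Σ p : ℕ × ℕ, Fin (min p.2 p.1 + 1)), f (pentEquiv x) :=
    (pentEquiv.tsum_eq f).symm
  have step2 : ∑' x : (Σ p : ℕ × ℕ, Fin (min p.2 p.1 + 1)), f (pentEquiv x)
      = ∑' p : ℕ × ℕ, ∑' k : Fin (min p.2 p.1 + 1), f (pentEquiv ⟨p, k⟩) :=
    Summable.tsum_sigma' (fun p => (hasSum_fintype _).summable) (pentEquiv.summable_iff.2 sumf)
  have step3 : ∀ p : ℕ × ℕ, ∑' k : Fin (min p.2 p.1 + 1), f (pentEquiv ⟨p, k⟩)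
      = (∑ k ∈ Finset.range (min p.2 p.1 + 1),
          qc q (p.2 - k) * qc q k * qc q (p.1 - k) * q ^ (k ^ 2)) • (V ^ p.2 * U ^ p.1) := by
    rintro ⟨m, n⟩
    rw [tsum_fintype]
    dsimp only
    have hfin : ∀ b : Fin (min n m + 1), f (pentEquiv ⟨(m, n), b⟩)
        = (fun k : ℕ => (qc q (n - k) * qc q k * qc q (m - k) * q ^ (k ^ 2))
            • (V ^ ((n - k) + k) * U ^ (k + (m - k)))) (b : ℕ) := fun b => rfl
    rw [Finset.sum_congr rfl fun b _ => hfin b]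
    refine (Fin.sum_univ_eq_sum_range
      (fun k : ℕ => (qc q (n - k) * qc q k * qc q (m - k) * q ^ (k ^ 2))
        • (V ^ ((n - k) + k) * U ^ (k + (m - k)))) (min n m + 1)).trans ?_
    rw [Finset.sum_smul]
    apply Finset.sum_congr rfl
    intro k hk
    have hk' : k ≤ min n m := by simp at hk; omega
    rw [show (n - k) + k = n by omega, show k + (m - k) = m by omega]
  rw [step1, step2, tsum_congr step3]
end
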